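/- arXiv:0905.1520 — 8 statements merged into one kernel-verified Lean document; each statement's English description precedes it below -/
import Mathlib

section
/- Let X be a compactum. Then X is an approximative absolute retract (AAR) if and only if the following approximate extension property holds: whenever Z is a closed subset of a compactum Y and f : Z → X is continuous, there is a sequence of continuous maps gₙ : Y → X whose restrictions to Z converge uniformly to f (with respect to any compatible metric on X). -/
open Filter Topology Set TopologicalSpace

/-- `F n` converges uniformly to `f` with respect to every metric on `X`
compatible with its topology. (On a compactum all compatible metrics are
uniformly equivalent, so this is the usual notion of uniform convergence
"with respect to any compatible metric".) -/
def TendstoUniformlyCompat {Z X : Type*} [tX : TopologicalSpace X]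
    (F : ℕ → Z → X) (f : Z → X) : Prop :=
  ∀ m : MetricSpace X, m.toUniformSpace.toTopologicalSpace = tX →
    @TendstoUniformly Z X ℕ m.toUniformSpace F f atTop

/-- A (compact metrizable) space `X` is an approximative absolute retract:
for every compactum `Y` and every topological embedding `ι : X → Y` with closed
image there is a sequence of continuous maps `rₙ : Y → X` with `rₙ ∘ ι`
converging uniformly to the identity of `X`. -/
def IsAAR (X : Type*) [TopologicalSpace X] : Prop :=
  ∀ (Y : Type*) [TopologicalSpace Y] [CompactSpace Y] [MetrizableSpace Y]
    (ι : X → Y), Topology.IsEmbedding ι → IsClosed (Set.range ι) →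
    ∃ r : ℕ → Y → X, (∀ n, Continuous (r n)) ∧
      TendstoUniformlyCompat (fun n x => r n (ι x)) id

universe u

/-- The unit interval has the Tietze extension property, being a retract of `ℝ`. -/
instance instTietzeExtensionIccAux : TietzeExtension.{u} (Set.Icc (0:ℝ) 1) :=
  .of_retract ⟨Subtype.val, continuous_subtype_val⟩
    ⟨Set.projIcc 0 1 zero_le_one, continuous_projIcc⟩ (by ext x; simp)

/-- Every compactum embeds as a closed subset of the Hilbert cube. -/
theorem exists_closedEmbedding_hilbertCube (X : Type*) [TopologicalSpace X] [CompactSpace X]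
    [MetrizableSpace X] :
    ∃ ι : X → (ℕ → Set.Icc (0:ℝ) 1), Topology.IsClosedEmbedding ι := by
  rcases isEmpty_or_nonempty X with h | h
  · refine ⟨fun x => isEmptyElim x, ?_⟩
    have hc : Continuous (fun x : X => (isEmptyElim x : ℕ → Set.Icc (0:ℝ) 1)) :=
      continuous_def.mpr fun s _ => by
        rw [Set.eq_empty_of_isEmpty ((fun x : X => (isEmptyElim x : ℕ → Set.Icc (0:ℝ) 1)) ⁻¹' s)]
        exact isOpen_empty
    have hce := hc.isClosedEmbedding (fun a => isEmptyElim a)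
    exact hce
  · letI : MetricSpace X := metrizableSpaceMetric X
    set u : ℕ → X := denseSeq X with hu_def
    have hu : DenseRange u := denseRange_denseSeq X
    have hbd : Bornology.IsBounded (Set.univ : Set X) := isCompact_univ.isBounded
    set D : ℝ := Metric.diam (Set.univ : Set X) with hD_def
    have hD : 0 ≤ D := Metric.diam_nonneg
    have hdist : ∀ (x : X) (n : ℕ), dist x (u n) ≤ D := fun x n =>
      Metric.dist_le_diam_of_mem hbd trivial trivial
    have hD1 : (0:ℝ) < D + 1 := by linarith
    set e : X → (ℕ → Set.Icc (0:ℝ) 1) := fun x n =>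
      ⟨dist x (u n) / (D + 1), ⟨by positivity,
        (div_le_one hD1).mpr (by linarith [hdist x n])⟩⟩ with he_def
    have hec : Continuous e := continuous_pi fun n =>
      Continuous.subtype_mk ((continuous_id.dist continuous_const).div_const _) _
    have hinj : Function.Injective e := by
      intro x y hxy
      have hdeq : ∀ n, dist x (u n) = dist y (u n) := by
        intro n
        have := congrArg Subtype.val (congrFun hxy n)
        simp only [he_def] at this
        have h3 := congrArg (fun t : ℝ => t * (D + 1)) this
        simpa [div_mul_cancel₀, hD1.ne'] using h3
      refine eq_of_forall_dist_le fun ε hε => ?_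
      obtain ⟨n, hn⟩ := Metric.denseRange_iff.mp hu x (ε / 2) (by linarith)
      calc dist x y ≤ dist x (u n) + dist (u n) y := dist_triangle _ _ _
        _ = dist x (u n) + dist y (u n) := by rw [dist_comm (u n) y]
        _ = dist x (u n) + dist x (u n) := by rw [hdeq n]
        _ ≤ ε / 2 + ε / 2 := by linarith [hn.le]
        _ = ε := by ring
    have hce := hec.isClosedEmbedding hinj
    exact ⟨e, hce⟩

theorem statement0 (X : Type*) [TopologicalSpace X] [CompactSpace X] [MetrizableSpace X] :
    IsAAR X ↔
      ∀ (Y : Type*) [TopologicalSpace Y] [CompactSpace Y] [MetrizableSpace Y]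
        (Z : Set Y), IsClosed Z → ∀ f : Z → X, Continuous f →
        ∃ g : ℕ → Y → X, (∀ n, Continuous (g n)) ∧
          TendstoUniformlyCompat (fun n (z : Z) => g n (z : Y)) f := by
  constructor
  · intro hA Y _ _ _ Z hZ f hf
    obtain ⟨ιH, hιH⟩ := exists_closedEmbedding_hilbertCube X
    set L := ULift.{u_3} (ℕ → Set.Icc (0:ℝ) 1) with hL
    haveI : CompactSpace L := Homeomorph.ulift.symm.compactSpace
    haveI : MetrizableSpace L := Homeomorph.ulift.isEmbedding.metrizableSpace
    have hι' : Topology.IsClosedEmbedding (fun x => ULift.up (ιH x) : X → L) :=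
      Homeomorph.ulift.symm.isClosedEmbedding.comp hιH
    obtain ⟨r, hrc, hru⟩ := hA L _ hι'.toIsEmbedding hι'.isClosed_range
    obtain ⟨G, hG⟩ := ContinuousMap.exists_restrict_eq (X := Y)
      (Y := ℕ → Set.Icc (0:ℝ) 1) hZ ⟨fun z => ιH (f z), hιH.continuous.comp hf⟩
    have key : ∀ z : Z, G (z : Y) = ιH (f z) := fun z => DFunLike.congr_fun hG z
    refine ⟨fun n y => r n (ULift.up (G y)),
      fun n => (hrc n).comp (continuous_uliftUp.comp G.continuous), ?_⟩
    intro m hm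
    have h1 := (hru m hm).comp f
    have heq : (fun n (z : Z) => r n (ULift.up (G (z : Y)))) =
        fun n => (fun x => r n (ULift.up (ιH x))) ∘ f := by
      funext n z
      simp only [Function.comp_apply, key z]
    rw [heq, show f = id ∘ f from rfl]
    exact h1
  · intro hE Y _ _ _ ι hι hcl
    obtain ⟨j, hj⟩ := exists_closedEmbedding_hilbertCube Y
    set L := ULift.{u_2} (ℕ → Set.Icc (0:ℝ) 1) with hL
    haveI : CompactSpace L := Homeomorph.ulift.symm.compactSpace
    haveI : MetrizableSpace L := Homeomorph.ulift.isEmbedding.metrizableSpace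
    set k : Y → L := fun y => ULift.up (j y) with hk
    have hkce : Topology.IsClosedEmbedding k :=
      Homeomorph.ulift.symm.isClosedEmbedding.comp hj
    set κ : X → L := fun x => k (ι x) with hκ
    have hκce : Topology.IsClosedEmbedding κ :=
      hkce.comp ⟨hι, hcl⟩
    set e : X ≃ₜ Set.range κ := hκce.toIsEmbedding.toHomeomorph with he_def
    obtain ⟨g, hgc, hgu⟩ := hE L (Set.range κ) hκce.isClosed_range
      (fun z => e.symm z) (e.symm.continuous)
    refine ⟨fun n y => g n (k y), fun n => (hgc n).comp hkce.continuous, ?_⟩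
    intro m hm
    have h1 := (hgu m hm).comp (fun x : X => (⟨κ x, Set.mem_range_self x⟩ : Set.range κ))
    have heq2 : ((fun z : Set.range κ => e.symm z) ∘
        fun x : X => (⟨κ x, Set.mem_range_self x⟩ : Set.range κ)) = id := by
      funext x
      have hx : (⟨κ x, Set.mem_range_self x⟩ : Set.range κ) = e x := Subtype.ext rfl
      simp only [Function.comp_apply, hx, Homeomorph.symm_apply_apply, id_eq]
    rw [heq2] at h1
    exact h1
end

section
/- Let X be a compactum. Then X is an approximative absolute retract (AAR) if and only if for every surjective unital *-homomorphism π : B → C between separable unital commutative C*-algebras and every unital *-homomorphism φ : C(X, ℂ) → C, there is a sequence of unital *-homomorphisms φₙ : C(X, ℂ) → B such that ‖π(φₙ(h)) − φ(h)‖ → 0 for every h ∈ C(X, ℂ). -/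
open Filter Topology Set TopologicalSpace

/-- A pointed (compact metrizable) space `(X, x₀)` is a pointed approximative
absolute retract: for every compactum `Y` and every topological embedding
`ι : X → Y` with closed image there is a sequence of continuous maps
`rₙ : Y → X` fixing the base point (`rₙ (ι x₀) = x₀`) with `rₙ ∘ ι`
converging uniformly to the identity of `X`. -/
def IsPointedAAR (X : Type*) [TopologicalSpace X] (x₀ : X) : Prop :=
  ∀ (Y : Type*) [TopologicalSpace Y] [CompactSpace Y] [MetrizableSpace Y]
    (ι : X → Y), Topology.IsEmbedding ι → IsClosed (Set.range ι) →
    ∃ r : ℕ → Y → X, (∀ n, Continuous (r n)) ∧ (∀ n, r n (ι x₀) = x₀) ∧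
      TendstoUniformlyCompat (fun n x => r n (ι x)) id

/-! ### Auxiliary lemmas -/

section AuxLemmas

open WeakDual WeakDual.CharacterSpace

instance AAR.IccTietze : TietzeExtension.{u} (Set.Icc (0:ℝ) 1) :=
  TietzeExtension.of_retract ⟨Subtype.val, continuous_subtype_val⟩
    ⟨fun x => Set.projIcc 0 1 zero_le_one x, continuous_projIcc⟩
    (by ext x; simp)

/-- The Hilbert cube. -/
abbrev AAR.Cube : Type := ℕ → Set.Icc (0:ℝ) 1

lemma AAR.cube_embedding_metric (X : Type*) [MetricSpace X] [CompactSpace X] [Nonempty X] :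
    ∃ e : X → AAR.Cube, IsClosedEmbedding e := by
  obtain ⟨u, hu⟩ := TopologicalSpace.exists_dense_seq X
  have hmem : ∀ (x : X) (n : ℕ), min (dist x (u n)) 1 ∈ Set.Icc (0:ℝ) 1 :=
    fun x n => ⟨le_min dist_nonneg zero_le_one, min_le_right _ _⟩
  refine ⟨fun x n => ⟨min (dist x (u n)) 1, hmem x n⟩, ?_⟩
  have hcont : Continuous fun (x : X) (n : ℕ) =>
      (⟨min (dist x (u n)) 1, hmem x n⟩ : Set.Icc (0:ℝ) 1) :=
    continuous_pi fun n => Continuous.subtype_mk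
      ((continuous_id.dist continuous_const).min continuous_const) _
  refine hcont.isClosedEmbedding ?_
  intro x y hxy
  have key : ∀ n, min (dist x (u n)) 1 = min (dist y (u n)) 1 := by
    intro n
    exact congrArg Subtype.val (congrFun hxy n)
  have hd : dist x y ≤ 0 := by
    refine le_of_forall_pos_le_add fun ε hε => ?_
    have hδ : 0 < min (ε/2) (1/2) := lt_min (by linarith) (by norm_num)
    obtain ⟨n, hn⟩ := hu.exists_dist_lt x hδ
    have h1 : dist x (u n) < 1 :=
      hn.trans_le ((min_le_right _ _).trans (by norm_num : (1:ℝ)/2 ≤ 1))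
    have h2 : min (dist y (u n)) 1 = dist x (u n) := by
      rw [← key n, min_eq_left h1.le]
    have h3 : dist y (u n) < 1 := by
      by_contra hc
      push_neg at hc
      rw [min_eq_right hc] at h2
      exact absurd h2.symm h1.ne
    rw [min_eq_left h3.le] at h2
    calc dist x y ≤ dist x (u n) + dist (u n) y := dist_triangle _ _ _
      _ = dist x (u n) + dist y (u n) := by rw [dist_comm (u n) y]
      _ ≤ min (ε/2) (1/2) + min (ε/2) (1/2) := by rw [h2]; exact add_le_add hn.le hn.le
      _ ≤ ε/2 + ε/2 := add_le_add (min_le_left _ _) (min_le_left _ _)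
      _ ≤ 0 + ε := by linarith
  exact eq_of_dist_eq_zero (le_antisymm hd dist_nonneg)

lemma AAR.cube_embedding (X : Type*) [TopologicalSpace X] [CompactSpace X] [MetrizableSpace X]
    [Nonempty X] : ∃ e : X → AAR.Cube, IsClosedEmbedding e := by
  letI := metrizableSpaceMetric X
  exact AAR.cube_embedding_metric X

lemma AAR.metric_aux_A {X : Type*} [MetricSpace X] [CompactSpace X] (F : ℕ → X → X)
    (hF : ∀ g : C(X, ℝ), ∀ ε > 0, ∀ᶠ n in atTop, ∀ x, |g (F n x) - g x| < ε) :
    TendstoUniformly F id atTop := by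
  rw [Metric.tendstoUniformly_iff]
  intro ε hε
  obtain ⟨s, hsfin, hscov⟩ :=
    (Metric.totallyBounded_iff (s := (univ : Set X))).mp isCompact_univ.totallyBounded
      (ε/3) (by positivity)
  have key : ∀ᶠ n in atTop, ∀ c ∈ s, ∀ x, |dist (F n x) c - dist x c| < ε/3 := by
    rw [eventually_all_finite hsfin]
    intro c _
    simpa using hF ⟨fun x => dist x c, continuous_id.dist continuous_const⟩ (ε/3) (by positivity)
  filter_upwards [key] with n hn x
  have hx := hscov (mem_univ x)
  simp only [mem_iUnion, Metric.mem_ball, exists_prop] at hx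
  obtain ⟨c, hcs, hxc⟩ := hx
  have h2 := hn c hcs x
  have h3 : dist (F n x) c < dist x c + ε/3 := by
    have := abs_lt.mp h2
    linarith [this.1, this.2]
  calc dist (id x) (F n x) ≤ dist x c + dist c (F n x) := dist_triangle _ _ _
    _ = dist x c + dist (F n x) c := by rw [dist_comm c (F n x)]
    _ < ε := by linarith

lemma AAR.aux_A {X : Type*} [tX : TopologicalSpace X] [CompactSpace X]
    (F : ℕ → X → X)
    (hF : ∀ g : C(X, ℝ), ∀ ε > 0, ∀ᶠ n in atTop, ∀ x, |g (F n x) - g x| < ε) :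
    TendstoUniformlyCompat F id := by
  intro m hm
  subst hm
  letI := m
  exact AAR.metric_aux_A F hF

lemma AAR.metric_aux_C {X : Type*} [MetricSpace X] [CompactSpace X] {F : ℕ → X → X}
    (hconv : TendstoUniformly F id atTop) (h : C(X, ℂ)) :
    ∀ ε > 0, ∀ᶠ n in atTop, ∀ x, ‖h (F n x) - h x‖ < ε := by
  intro ε hε
  have huc : UniformContinuous h := CompactSpace.uniformContinuous_of_continuous h.continuous
  obtain ⟨δ, hδ, hδ'⟩ := Metric.uniformContinuous_iff.mp huc ε hε
  filter_upwards [Metric.tendstoUniformly_iff.mp hconv δ hδ] with n hn x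
  have := hδ' (a := F n x) (b := x) (by simpa [dist_comm] using hn x)
  rwa [dist_eq_norm] at this

/-- The continuous map associated to a unital ⋆-homomorphism between algebras of continuous
functions on compact Hausdorff spaces. -/
noncomputable def AAR.toMap {K L : Type*} [TopologicalSpace K] [CompactSpace K] [T2Space K]
    [TopologicalSpace L] [CompactSpace L] [T2Space L]
    (ψ : C(K, ℂ) →⋆ₐ[ℂ] C(L, ℂ)) : L → K :=
  fun y => (homeoEval K ℂ).symm (compContinuousMap ψ (homeoEval L ℂ y))

lemma AAR.toMap_continuous {K L : Type*} [TopologicalSpace K] [CompactSpace K] [T2Space K]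
    [TopologicalSpace L] [CompactSpace L] [T2Space L] (ψ : C(K, ℂ) →⋆ₐ[ℂ] C(L, ℂ)) :
    Continuous (AAR.toMap ψ) :=
  (homeoEval K ℂ).symm.continuous.comp
    ((map_continuous (compContinuousMap ψ)).comp (homeoEval L ℂ).continuous)

lemma AAR.toMap_spec {K L : Type*} [TopologicalSpace K] [CompactSpace K] [T2Space K]
    [TopologicalSpace L] [CompactSpace L] [T2Space L]
    (ψ : C(K, ℂ) →⋆ₐ[ℂ] C(L, ℂ)) (h : C(K, ℂ)) (y : L) :
    h (AAR.toMap ψ y) = (ψ h) y := by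
  calc h (AAR.toMap ψ y) = (homeoEval K ℂ (AAR.toMap ψ y)) h := rfl
    _ = (compContinuousMap ψ (homeoEval L ℂ y)) h := by
        rw [AAR.toMap, (homeoEval K ℂ).apply_symm_apply]
    _ = (ψ h) y := rfl

end AuxLemmas

set_option maxHeartbeats 2000000 in
theorem statement1 (X : Type*) [TopologicalSpace X] [CompactSpace X] [MetrizableSpace X] :
    IsAAR X ↔
      ∀ (B C : Type*) [CommCStarAlgebra B] [CommCStarAlgebra C]
        [SeparableSpace B] [SeparableSpace C]
        (π : B →⋆ₐ[ℂ] C), Function.Surjective π →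
        ∀ φ : C(X, ℂ) →⋆ₐ[ℂ] C,
          ∃ φₙ : ℕ → (C(X, ℂ) →⋆ₐ[ℂ] B),
            ∀ h : C(X, ℂ), Tendsto (fun n => ‖π (φₙ n h) - φ h‖) atTop (𝓝 0) := by

  constructor
  · -- Forward direction
    intro hAAR B C instB instC sepB sepC π hπ φ
    by_cases hX : Nonempty X
    · haveI := hX
      set p : C(WeakDual.characterSpace ℂ C, WeakDual.characterSpace ℂ B) :=
        WeakDual.CharacterSpace.compContinuousMap π with hp_def
      have hpinj : Function.Injective p := by
        intro χ₁ χ₂ hc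
        apply DFunLike.ext
        intro c
        obtain ⟨b, rfl⟩ := hπ c
        have h1 : (p χ₁) b = (p χ₂) b := by rw [hc]
        exact h1
      have hpce : IsClosedEmbedding p := (map_continuous p).isClosedEmbedding hpinj
      set φ' : C(X, ℂ) →⋆ₐ[ℂ] C(WeakDual.characterSpace ℂ C, ℂ) :=
        ((gelfandStarTransform C : C →⋆ₐ[ℂ] C(WeakDual.characterSpace ℂ C, ℂ)).comp φ) with hφ'_def
      set f : WeakDual.characterSpace ℂ C → X := AAR.toMap φ' with hf_def
      obtain ⟨e, he⟩ := AAR.cube_embedding X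
      haveI : CompactSpace (ULift.{u_4} AAR.Cube) := Homeomorph.ulift.symm.compactSpace
      haveI : MetrizableSpace (ULift.{u_4} AAR.Cube) :=
        Homeomorph.ulift.isEmbedding.metrizableSpace
      set eL : X → ULift.{u_4} AAR.Cube := fun x => ULift.up (e x) with heL_def
      have heL : IsClosedEmbedding eL := Homeomorph.ulift.symm.isClosedEmbedding.comp he
      obtain ⟨r, hrc, hrconv⟩ :=
        hAAR (ULift.{u_4} AAR.Cube) eL heL.toIsEmbedding heL.isClosed_range
      set fc : C(WeakDual.characterSpace ℂ C, AAR.Cube) :=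
        ⟨fun z => e (f z), he.continuous.comp (AAR.toMap_continuous φ')⟩ with hfc_def
      obtain ⟨G, hG⟩ := fc.exists_extension hpce
      set g : ℕ → C(WeakDual.characterSpace ℂ B, X) := fun n =>
        ⟨fun w => r n (ULift.up (G w)),
          (hrc n).comp (Homeomorph.ulift.symm.continuous.comp G.continuous)⟩ with hg_def
      set φₙ : ℕ → (C(X, ℂ) →⋆ₐ[ℂ] B) := fun n =>
        (((gelfandStarTransform B).symm : C(WeakDual.characterSpace ℂ B, ℂ) →⋆ₐ[ℂ] B)).comp
          ((g n).compStarAlgHom' ℂ ℂ) with hφₙ_def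
      refine ⟨φₙ, fun h => ?_⟩
      rw [NormedAddCommGroup.tendsto_nhds_zero]
      intro ε hε
      have hcv := hrconv (metrizableSpaceMetric X) rfl
      have key := @AAR.metric_aux_C X (metrizableSpaceMetric X) ‹CompactSpace X›
        (fun n x => r n (eL x)) hcv h (ε/2) (by positivity)
      filter_upwards [key] with n hn
      rw [Real.norm_eq_abs, abs_of_nonneg (norm_nonneg _)]
      have hnorm : ‖π (φₙ n h) - φ h‖ =
          ‖gelfandStarTransform C (π (φₙ n h)) - gelfandStarTransform C (φ h)‖ := by
        rw [← dist_eq_norm, ← dist_eq_norm]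
        exact ((gelfandTransform_isometry C).dist_eq _ _).symm
      have e0 : gelfandStarTransform C (π (φₙ n h)) =
          ((gelfandStarTransform B (φₙ n h)).comp p) :=
        DFunLike.congr_fun (gelfandStarTransform_naturality (A := B) (B := C) π) (φₙ n h)
      have eΓB : gelfandStarTransform B (φₙ n h) = h.comp (g n) := by
        show gelfandStarTransform B
          ((gelfandStarTransform B).symm (((g n).compStarAlgHom' ℂ ℂ) h)) = h.comp (g n)
        rw [StarAlgEquiv.apply_symm_apply]
        rfl
      have e0' : ∀ z, gelfandStarTransform C (π (φₙ n h)) z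
          = h (r n (ULift.up (G (p z)))) := by
        intro z
        rw [e0]
        calc (gelfandStarTransform B (φₙ n h)).comp p z
            = (gelfandStarTransform B (φₙ n h)) (p z) := rfl
          _ = (h.comp (g n)) (p z) := by rw [eΓB]
          _ = h (r n (ULift.up (G (p z)))) := rfl
      have eG : ∀ z, G (p z) = e (f z) := fun z => DFunLike.congr_fun hG z
      have e2 : ∀ z, gelfandStarTransform C (φ h) z = h (f z) :=
        fun z => (AAR.toMap_spec φ' h z).symm
      have hb : ‖gelfandStarTransform C (π (φₙ n h)) - gelfandStarTransform C (φ h)‖ ≤ ε/2 := by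
        rw [ContinuousMap.norm_le _ (by positivity)]
        intro z
        rw [ContinuousMap.sub_apply, e0' z, e2 z]
        have hre : r n (ULift.up (G (p z))) = r n (eL (f z)) := by rw [eG z]
        rw [hre]
        exact (hn (f z)).le
      calc ‖π (φₙ n h) - φ h‖
          = ‖gelfandStarTransform C (π (φₙ n h)) - gelfandStarTransform C (φ h)‖ := hnorm
        _ ≤ ε/2 := hb
        _ < ε := by linarith
    · exfalso
      rw [not_nonempty_iff] at hX
      haveI : CompactSpace (ULift.{u_4} PUnit.{1}) := Homeomorph.ulift.symm.compactSpace
      haveI : MetrizableSpace (ULift.{u_4} PUnit.{1}) :=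
        Homeomorph.ulift.isEmbedding.metrizableSpace
      have hsub : ∀ (t₁ t₂ : TopologicalSpace X), t₁ = t₂ := fun t₁ t₂ => by
        refine TopologicalSpace.ext_iff.mpr fun s => ?_
        have hs : s = univ := Set.eq_univ_of_forall (fun a => isEmptyElim a)
        rw [hs]
        exact iff_of_true (@isOpen_univ X t₁) (@isOpen_univ X t₂)
      have hemb : Topology.IsEmbedding
          (fun x : X => (ULift.up PUnit.unit : ULift.{u_4} PUnit.{1})) :=
        ⟨⟨hsub _ _⟩, fun a b _ => isEmptyElim a⟩
      have hcl : IsClosed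
          (Set.range (fun x : X => (ULift.up PUnit.unit : ULift.{u_4} PUnit.{1}))) := by
        rw [Set.range_eq_empty]
        exact isClosed_empty
      obtain ⟨r, -, -⟩ := hAAR _ _ hemb hcl
      exact hX.false (r 0 (ULift.up PUnit.unit))
  · -- Reverse direction
    intro hyp Y tY cY mY ι hι hclosed
    by_cases hX : Nonempty X
    · -- main case
      haveI := hX
      haveI : Nonempty Y := ⟨ι (Classical.arbitrary X)⟩
      -- embed Y into the Hilbert cube
      obtain ⟨eY, heY⟩ := AAR.cube_embedding Y
      set e : X → AAR.Cube := fun x => eY (ι x) with he_def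
      have he : IsClosedEmbedding e := heY.comp ⟨hι, hclosed⟩
      -- the lifted Hilbert cube and the lifted copy of X
      haveI : CompactSpace (ULift.{u_2} AAR.Cube) := Homeomorph.ulift.symm.compactSpace
      haveI : MetrizableSpace (ULift.{u_2} AAR.Cube) :=
        Homeomorph.ulift.isEmbedding.metrizableSpace
      set K : Set AAR.Cube := Set.range e with hK_def
      haveI : CompactSpace K := isCompact_iff_compactSpace.mp
        (he.isClosed_range.isCompact)
      haveI : CompactSpace (ULift.{u_3} K) := Homeomorph.ulift.symm.compactSpace
      haveI : MetrizableSpace (ULift.{u_3} K) :=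
        Homeomorph.ulift.isEmbedding.metrizableSpace
      set θ : ULift.{u_3} K ≃ₜ X :=
        Homeomorph.ulift.trans (he.isEmbedding.toHomeomorph).symm with hθ_def
      set j : C(ULift.{u_3} K, ULift.{u_2} AAR.Cube) :=
        ⟨fun a => ULift.up a.down.1,
          Homeomorph.ulift.symm.continuous.comp
            (continuous_subtype_val.comp Homeomorph.ulift.continuous)⟩ with hj_def
      have hjce : IsClosedEmbedding j := by
        refine (map_continuous j).isClosedEmbedding ?_
        intro a b hab
        cases a with
        | up av =>
          cases b with
          | up bv =>
            exact congrArg ULift.up (Subtype.ext (congrArg ULift.down hab))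
      -- the surjection and the hom
      set π : C(ULift.{u_2} AAR.Cube, ℂ) →⋆ₐ[ℂ] C(ULift.{u_3} K, ℂ) :=
        j.compStarAlgHom' ℂ ℂ with hπ_def
      have hπsurj : Function.Surjective π := by
        intro h
        obtain ⟨g, hg⟩ := h.exists_extension hjce
        exact ⟨g, hg⟩
      set θc : C(ULift.{u_3} K, X) := ⟨θ, θ.continuous⟩ with hθc_def
      set φ : C(X, ℂ) →⋆ₐ[ℂ] C(ULift.{u_3} K, ℂ) := θc.compStarAlgHom' ℂ ℂ with hφ_def
      -- separability instances
      haveI : SecondCountableTopology (ULift.{u_2} AAR.Cube) := by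
        letI := metrizableSpaceMetric (ULift.{u_2} AAR.Cube)
        infer_instance
      haveI : SecondCountableTopology (ULift.{u_3} K) := by
        letI := metrizableSpaceMetric (ULift.{u_3} K)
        infer_instance
      haveI : LocallyCompactSpace (ULift.{u_2} AAR.Cube) := inferInstance
      haveI : LocallyCompactSpace (ULift.{u_3} K) := inferInstance
      obtain ⟨φₙ, hφₙ⟩ := hyp (C(ULift.{u_2} AAR.Cube, ℂ)) (C(ULift.{u_3} K, ℂ)) π hπsurj φ
      -- the retractions
      refine ⟨fun n y => AAR.toMap (φₙ n) (ULift.up (eY y)), fun n =>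
        (AAR.toMap_continuous (φₙ n)).comp
          (Homeomorph.ulift.symm.continuous.comp heY.continuous), ?_⟩
      refine AAR.aux_A _ ?_
      intro g ε hε
      set gc : C(X, ℂ) := (⟨Complex.ofReal, Complex.continuous_ofReal⟩ : C(ℝ, ℂ)).comp g
        with hgc_def
      have hev : ∀ᶠ n in atTop, ‖π (φₙ n gc) - φ gc‖ < ε :=
        (hφₙ gc).eventually (gt_mem_nhds hε)
      filter_upwards [hev] with n hn x
      have h1 : (π (φₙ n gc)) (θ.symm x) = gc (AAR.toMap (φₙ n) (ULift.up (e x))) := by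
        calc (π (φₙ n gc)) (θ.symm x) = (φₙ n gc) (ULift.up (e x)) := rfl
          _ = gc (AAR.toMap (φₙ n) (ULift.up (e x))) := (AAR.toMap_spec _ _ _).symm
      have h2 : (φ gc) (θ.symm x) = gc x := by
        calc (φ gc) (θ.symm x) = gc (θ (θ.symm x)) := rfl
          _ = gc x := by rw [Homeomorph.apply_symm_apply]
      have h3 : ‖gc (AAR.toMap (φₙ n) (ULift.up (e x))) - gc x‖ < ε := by
        rw [← h1, ← h2, ← ContinuousMap.sub_apply]
        exact lt_of_le_of_lt (ContinuousMap.norm_coe_le_norm _ _) hn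
      have h4 : gc (AAR.toMap (φₙ n) (ULift.up (e x))) - gc x
          = ((g (AAR.toMap (φₙ n) (ULift.up (e x))) - g x : ℝ) : ℂ) := by
        push_cast
        rfl
      rw [h4, Complex.norm_real, Real.norm_eq_abs] at h3
      exact h3
    · -- X is empty : the hypothesis is contradictory
      exfalso
      rw [not_nonempty_iff] at hX
      haveI : Subsingleton C(X, ℂ) := ⟨fun f g => ContinuousMap.ext fun a => isEmptyElim a⟩
      haveI : CompactSpace (ULift.{u_2} PUnit.{1}) := Homeomorph.ulift.symm.compactSpace
      haveI : MetrizableSpace (ULift.{u_2} PUnit.{1}) :=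
        Homeomorph.ulift.isEmbedding.metrizableSpace
      haveI : SecondCountableTopology (ULift.{u_2} PUnit.{1}) := by
        letI := metrizableSpaceMetric (ULift.{u_2} PUnit.{1})
        infer_instance
      haveI : LocallyCompactSpace (ULift.{u_2} PUnit.{1}) := inferInstance
      haveI : SeparableSpace C(ULift.{u_2} PUnit.{1}, ℂ) := inferInstance
      haveI : CompactSpace (ULift.{u_3} Empty) := Homeomorph.ulift.symm.compactSpace
      haveI : MetrizableSpace (ULift.{u_3} Empty) :=
        Homeomorph.ulift.isEmbedding.metrizableSpace
      haveI : SecondCountableTopology (ULift.{u_3} Empty) := by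
        letI := metrizableSpaceMetric (ULift.{u_3} Empty)
        infer_instance
      haveI : LocallyCompactSpace (ULift.{u_3} Empty) := inferInstance
      haveI : SeparableSpace C(ULift.{u_3} Empty, ℂ) := inferInstance
      haveI : Subsingleton C(ULift.{u_3} Empty, ℂ) :=
        ⟨fun f g => ContinuousMap.ext fun a => isEmptyElim a⟩
      have hcont : Continuous (fun a : ULift.{u_3} Empty => (ULift.up PUnit.unit : ULift.{u_2} PUnit.{1})) :=
        continuous_const
      set π : C(ULift.{u_2} PUnit.{1}, ℂ) →⋆ₐ[ℂ] C(ULift.{u_3} Empty, ℂ) :=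
        (⟨fun a => ULift.up PUnit.unit, hcont⟩ :
          C(ULift.{u_3} Empty, ULift.{u_2} PUnit.{1})).compStarAlgHom' ℂ ℂ with hπ_def
      have hπsurj : Function.Surjective π := fun g => ⟨1, Subsingleton.elim _ _⟩
      have hcont2 : Continuous (fun a : ULift.{u_3} Empty => (isEmptyElim a : X)) := by
        rw [continuous_def]
        intro s _
        have : (fun a : ULift.{u_3} Empty => (isEmptyElim a : X)) ⁻¹' s = ∅ :=
          Set.eq_empty_of_isEmpty _
        rw [this]
        exact isOpen_empty
      set φ : C(X, ℂ) →⋆ₐ[ℂ] C(ULift.{u_3} Empty, ℂ) :=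
        (⟨fun a => isEmptyElim a, hcont2⟩ : C(ULift.{u_3} Empty, X)).compStarAlgHom' ℂ ℂ
        with hφ_def
      obtain ⟨φₙ, -⟩ := hyp (C(ULift.{u_2} PUnit.{1}, ℂ)) (C(ULift.{u_3} Empty, ℂ)) π hπsurj φ
      have h1 : (φₙ 0) 1 = 1 := map_one _
      have h0 : (1 : C(X, ℂ)) = 0 := Subsingleton.elim _ _
      rw [h0, map_zero] at h1
      have := DFunLike.congr_fun h1.symm (ULift.up PUnit.unit)
      simp at this
end

section
/- Let X be a compactum and let θₙ : X → X be a sequence of continuous maps converging uniformly to the identity map of X (with respect to a compatible metric on X). If for each n the image θₙ(X), with the subspace topology, is an approximative absolute retract, then X is an approximative absolute retract. -/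
open Filter Topology Set TopologicalSpace

instance : TietzeExtension (Set.Icc (0:ℝ) 1) :=
  .of_retract ⟨Subtype.val, continuous_subtype_val⟩
    ⟨Set.projIcc 0 1 zero_le_one, continuous_projIcc⟩ (by ext x; simp)

universe uT vT wT in
instance {α : Type vT} [TopologicalSpace α] [TietzeExtension.{uT, vT} α] :
    TietzeExtension.{uT} (ULift.{wT} α) :=
  .of_homeo Homeomorph.ulift

instance {α : Type*} [TopologicalSpace α] [MetrizableSpace α] :
    MetrizableSpace (ULift α) :=
  Homeomorph.ulift.isEmbedding.metrizableSpace

/-- transfer uniform convergence w.r.t. one compatible metric to all of them -/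
lemma tuc_of_metric {Z X : Type*} [tX : TopologicalSpace X] [CompactSpace X]
    (m : MetricSpace X) (hm : m.toUniformSpace.toTopologicalSpace = tX)
    {F : ℕ → Z → X} {f : Z → X}
    (h : @TendstoUniformly Z X ℕ m.toUniformSpace F f atTop) :
    TendstoUniformlyCompat F f := by
  intro m' hm'
  rw [unique_uniformity_of_compact (γ := X) hm' hm]
  exact h

/-- every nonempty compactum embeds into the Hilbert cube -/
lemma exists_embedding_cube (Y : Type*) [TopologicalSpace Y] [CompactSpace Y]
    [MetrizableSpace Y] [Nonempty Y] :
    ∃ e : Y → (ℕ → Set.Icc (0:ℝ) 1), Topology.IsEmbedding e := by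
  letI mY := metrizableSpaceMetric Y
  haveI : SeparableSpace Y := inferInstance
  set u := TopologicalSpace.denseSeq Y with hu_def
  have hu : DenseRange u := TopologicalSpace.denseRange_denseSeq Y
  refine ⟨fun y k => Set.projIcc 0 1 zero_le_one (dist y (u k)), ?_⟩
  have hec : Continuous fun y k => Set.projIcc 0 1 zero_le_one (dist y (u k)) :=
    continuous_pi fun k => continuous_projIcc.comp (continuous_id.dist continuous_const)
  refine (hec.isClosedEmbedding ?_).toIsEmbedding
  intro y y' h
  have hd : ∀ k, min 1 (dist y (u k)) = min 1 (dist y' (u k)) := by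
    intro k
    have h1 := congrArg Subtype.val (congrFun h k)
    rw [Set.coe_projIcc, Set.coe_projIcc, max_eq_right (le_min zero_le_one dist_nonneg),
      max_eq_right (le_min zero_le_one dist_nonneg)] at h1
    exact h1
  by_contra hne
  have hpos : 0 < dist y y' := dist_pos.mpr hne
  have hεpos : 0 < min (dist y y' / 2) (1 / 2) := lt_min (by linarith) (by norm_num)
  obtain ⟨k, hk⟩ := hu.exists_dist_lt y hεpos
  have hk1 : dist y (u k) < 1 := lt_of_lt_of_le hk (min_le_right _ _ |>.trans (by norm_num))
  have h2 : min 1 (dist y' (u k)) = dist y (u k) := by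
    rw [← hd k, min_eq_right hk1.le]
  have h3 : dist y' (u k) = dist y (u k) := by
    rcases min_cases 1 (dist y' (u k)) with ⟨he, hle⟩ | ⟨he, hle⟩
    · rw [he] at h2; exact absurd h2.symm (ne_of_lt hk1)
    · rw [he] at h2; exact h2
  have ht : dist y y' ≤ dist y (u k) + dist (u k) y' := dist_triangle _ _ _
  rw [dist_comm (u k) y', h3] at ht
  have hk2 : dist y (u k) < dist y y' / 2 := lt_of_lt_of_le hk (min_le_left _ _)
  linarith

theorem statement2 (X : Type*) [TopologicalSpace X] [CompactSpace X] [MetrizableSpace X]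
    (θ : ℕ → X → X) (hcont : ∀ n, Continuous (θ n))
    (hconv : TendstoUniformlyCompat (fun n x => θ n x) id)
    (hAAR : ∀ n, IsAAR (Set.range (θ n))) :
    IsAAR X := by
  intro Y _ _ _ ι hι hclosed
  by_cases hY : Nonempty Y
  swap
  · haveI : IsEmpty Y := not_nonempty_iff.mp hY
    haveI : IsEmpty X := Function.isEmpty ι
    refine ⟨fun _ y => isEmptyElim y, fun n => ?_, fun m hm u hu => ?_⟩
    · refine continuous_def.mpr fun s _ => ?_
      convert isOpen_empty
      exact Set.eq_empty_of_isEmpty _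
    · filter_upwards with n x
      exact isEmptyElim x
  letI m := metrizableSpaceMetric X
  have hm : m.toUniformSpace.toTopologicalSpace = ‹TopologicalSpace X› := rfl
  obtain ⟨e, he⟩ := exists_embedding_cube Y
  haveI : NormalSpace Y := by letI := metrizableSpaceMetric Y; infer_instance
  let ψ : X ≃ₜ Set.range ι := hι.toHomeomorph
  have key : ∀ n : ℕ, ∃ f : Y → X, Continuous f ∧
      ∀ x : X, dist (f (ι x)) x ≤ 1 / ((n : ℝ) + 1) + dist (θ n x) x := by
    intro n
    haveI : CompactSpace (Set.range (θ n)) :=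
      isCompact_iff_compactSpace.mp (isCompact_range (hcont n))
    set j : Set.range (θ n) → ULift (ℕ → Set.Icc (0:ℝ) 1) :=
      fun a => ULift.up (e (ι (a : X))) with hj_def
    have hj : Topology.IsEmbedding j :=
      (Homeomorph.ulift.symm.isEmbedding.comp ((he.comp hι).comp
        Topology.IsEmbedding.subtypeVal) : _)
    have hjc : Continuous j := hj.continuous
    have hjcl : IsClosed (Set.range j) := (isCompact_range hjc).isClosed
    obtain ⟨s, hscont, hsconv⟩ := hAAR n (ULift (ℕ → Set.Icc (0:ℝ) 1)) j hj hjcl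
    have hsu := hsconv (Subtype.metricSpace) rfl
    have hε : (0:ℝ) < 1 / ((n : ℝ) + 1) := by positivity
    obtain ⟨k, hk⟩ := ((Metric.tendstoUniformly_iff.mp hsu) _ hε).exists
    -- build the extension G : Y → cube with G ∘ ι = up ∘ e ∘ ι ∘ θ n
    let g : C(↥(Set.range ι), ULift (ℕ → Set.Icc (0:ℝ) 1)) :=
      ⟨fun p => ULift.up (e (ι (θ n (ψ.symm p)))),
        Homeomorph.ulift.symm.continuous.comp (he.continuous.comp
          (hι.continuous.comp ((hcont n).comp ψ.symm.continuous)))⟩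
    obtain ⟨G, hG⟩ := ContinuousMap.exists_restrict_eq hclosed g
    have hGι : ∀ x : X, G (ι x) = ULift.up (e (ι (θ n x))) := by
      intro x
      have h1 : (G.restrict (Set.range ι)) ⟨ι x, mem_range_self x⟩
          = g ⟨ι x, mem_range_self x⟩ := by rw [hG]
      have h2 : ψ.symm ⟨ι x, mem_range_self x⟩ = x := by
        have h3 : (⟨ι x, mem_range_self x⟩ : Set.range ι) = ψ x := rfl
        rw [h3, Homeomorph.symm_apply_apply]
      exact h1.trans (by show ULift.up (e (ι (θ n (ψ.symm ⟨ι x, mem_range_self x⟩)))) = _; rw [h2])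
    refine ⟨fun y => (s k (G y) : X),
      continuous_subtype_val.comp ((hscont k).comp G.continuous), fun x => ?_⟩
    set a : Set.range (θ n) := ⟨θ n x, mem_range_self x⟩ with ha_def
    have h1 : G (ι x) = j a := hGι x
    have h2 : ((s k (G (ι x)) : X)) = ((s k (j a) : X)) := by rw [h1]
    show dist ((s k (G (ι x)) : X)) x ≤ 1 / ((n : ℝ) + 1) + dist (θ n x) x
    rw [h2]
    have h3 : dist ((s k (j a) : X)) x ≤ dist ((s k (j a) : X)) (θ n x) + dist (θ n x) x :=
      dist_triangle _ _ _
    have h4 : dist ((s k (j a) : X)) (θ n x) = dist (s k (j a)) a := by rw [Subtype.dist_eq]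
    have h5 : dist (s k (j a)) a < 1 / ((n : ℝ) + 1) := by
      have := hk a
      rwa [id, dist_comm] at this
    calc dist ((s k (j a) : X)) x ≤ dist (s k (j a)) a + dist (θ n x) x := by rw [← h4]; exact h3
      _ ≤ 1 / ((n : ℝ) + 1) + dist (θ n x) x := by linarith
  choose r hrc hrb using key
  refine ⟨r, hrc, ?_⟩
  apply tuc_of_metric m hm
  rw [Metric.tendstoUniformly_iff]
  intro ε hε
  have h1 := (Metric.tendstoUniformly_iff.mp (hconv m hm)) (ε / 2) (half_pos hε)
  have h2 : ∀ᶠ n : ℕ in atTop, 1 / ((n : ℝ) + 1) < ε / 2 :=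
    tendsto_one_div_add_atTop_nhds_zero_nat.eventually (gt_mem_nhds (half_pos hε))
  filter_upwards [h1, h2] with n hn1 hn2 x
  have h3 : dist (θ n x) x < ε / 2 := by
    have := hn1 x; rwa [id, dist_comm] at this
  calc dist (id x) (r n (ι x)) = dist (r n (ι x)) x := by rw [id, dist_comm]
    _ ≤ 1 / ((n : ℝ) + 1) + dist (θ n x) x := hrb n x
    _ < ε / 2 + ε / 2 := by linarith
    _ = ε := add_halves ε
end

section
/- Let T ⊆ ℝ² be the topologist's sine curve, namely the closure in ℝ² of the set {(t, sin(1/t)) : 0 < t ≤ 1}, equipped with the subspace topology. Then T is an approximative absolute retract but T is not an absolute retract. -/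
open Filter Topology Set TopologicalSpace Real

noncomputable section

/-- A (compact metrizable) space `X` is an absolute retract: for every
compactum `Y` and every topological embedding `ι : X → Y` with closed image
there is a continuous map `r : Y → X` with `r ∘ ι` the identity of `X`. -/
def IsAR (X : Type*) [TopologicalSpace X] : Prop :=
  ∀ (Y : Type*) [TopologicalSpace Y] [CompactSpace Y] [MetrizableSpace Y]
    (ι : X → Y), Topology.IsEmbedding ι → IsClosed (Set.range ι) →
    ∃ r : Y → X, Continuous r ∧ ∀ x, r (ι x) = x

/-- The topologist's sine curve: the closure in `ℝ²` of
`{(t, sin (1/t)) : 0 < t ≤ 1}`. -/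
def sineCurve : Set (ℝ × ℝ) :=
  closure {p : ℝ × ℝ | ∃ t : ℝ, 0 < t ∧ t ≤ 1 ∧ p = (t, Real.sin (1 / t))}


lemma sineGraph_subset :
    {p : ℝ × ℝ | ∃ t : ℝ, 0 < t ∧ t ≤ 1 ∧ p = (t, Real.sin (1 / t))} ⊆
      Icc (0:ℝ) 1 ×ˢ Icc (-1:ℝ) 1 := by
  rintro p ⟨t, ht0, ht1, rfl⟩
  exact ⟨⟨le_of_lt ht0, ht1⟩, Real.neg_one_le_sin _, Real.sin_le_one _⟩

lemma sineCurve_subset : sineCurve ⊆ Icc (0:ℝ) 1 ×ˢ Icc (-1:ℝ) 1 :=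
  closure_minimal sineGraph_subset ((isClosed_Icc).prod isClosed_Icc)

lemma sineCurve_isClosed : IsClosed sineCurve := isClosed_closure

lemma sineCurve_isCompact : IsCompact sineCurve :=
  ((isCompact_Icc).prod isCompact_Icc).of_isClosed_subset sineCurve_isClosed sineCurve_subset

lemma mem_sineCurve_graph {t : ℝ} (h0 : 0 < t) (h1 : t ≤ 1) :
    ((t, Real.sin (1 / t)) : ℝ × ℝ) ∈ sineCurve :=
  subset_closure ⟨t, h0, h1, rfl⟩

lemma sineCurve_snd_eq {p : ℝ × ℝ} (hp : p ∈ sineCurve) (h : 0 < p.1) :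
    p.1 ≤ 1 ∧ p.2 = Real.sin (1 / p.1) := by
  have hb := sineCurve_subset hp
  have hp1 : p.1 ≤ 1 := hb.1.2
  set ε : ℝ := p.1 / 2 with hε
  have hε0 : 0 < ε := by positivity
  have hεlt : ε < p.1 := by linarith
  -- split the graph
  set S := {q : ℝ × ℝ | ∃ t : ℝ, 0 < t ∧ t ≤ 1 ∧ q = (t, Real.sin (1 / t))} with hS
  have hsplit : S ⊆ ((fun t : ℝ => (t, Real.sin (1/t))) '' Icc ε 1) ∪ {q : ℝ × ℝ | q.1 ≤ ε} := by
    rintro q ⟨t, ht0, ht1, rfl⟩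
    rcases le_or_gt ε t with h' | h'
    · exact Or.inl ⟨t, ⟨h', ht1⟩, rfl⟩
    · exact Or.inr (le_of_lt h')
  have hcont : ContinuousOn (fun t : ℝ => (t, Real.sin (1/t))) (Icc ε 1) := by
    apply ContinuousOn.prodMk continuousOn_id
    exact Real.continuous_sin.comp_continuousOn <|
      continuousOn_const.div continuousOn_id (fun x hx => ne_of_gt (lt_of_lt_of_le hε0 hx.1))
  have hKc : IsCompact ((fun t : ℝ => (t, Real.sin (1/t))) '' Icc ε 1) :=
    isCompact_Icc.image_of_continuousOn hcont
  have hclosed : IsClosed (((fun t : ℝ => (t, Real.sin (1/t))) '' Icc ε 1) ∪ {q : ℝ × ℝ | q.1 ≤ ε}) :=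
    hKc.isClosed.union (isClosed_le continuous_fst continuous_const)
  have hsub : sineCurve ⊆ _ := closure_minimal hsplit hclosed
  rcases hsub hp with hmem | hmem
  · rcases hmem with ⟨t, ht, hq⟩
    have ht1 : t = p.1 := congrArg Prod.fst hq
    have := congrArg Prod.snd hq
    simp at this
    exact ⟨hp1, by rw [← this, ht1, one_div]⟩
  · exact absurd hmem (not_le.mpr hεlt)

lemma vert_mem_sineCurve {y : ℝ} (hy : y ∈ Icc (-1:ℝ) 1) : ((0, y) : ℝ × ℝ) ∈ sineCurve := by
  have hπ := Real.pi_gt_three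
  -- the points (1/θ k, y) with θ k = 2π(k+1) + π - arcsin y lie on the graph and tend to (0,y)
  set θ : ℕ → ℝ := fun k => (π - Real.arcsin y) + ((k+1 : ℕ) : ℝ) * (2 * π) with hθ
  have hθpos : ∀ k, 0 < θ k := by
    intro k
    have h1 : Real.arcsin y ≤ π / 2 := Real.arcsin_le_pi_div_two y
    simp only [hθ]; push_cast; nlinarith
  have hθge : ∀ k : ℕ, (k:ℝ) + 1 ≤ θ k := by
    intro k
    have h1 : Real.arcsin y ≤ π / 2 := Real.arcsin_le_pi_div_two y
    have h2 : ((k:ℝ)+1) * (2*π) ≥ ((k:ℝ)+1) * 6 := by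
      apply mul_le_mul_of_nonneg_left (by linarith) (by positivity)
    simp only [hθ]; push_cast; nlinarith
  have hsin : ∀ k, Real.sin (1 / (θ k)⁻¹) = y := by
    intro k
    rw [one_div, inv_inv, hθ]
    rw [Real.sin_add_nat_mul_two_pi, Real.sin_pi_sub, Real.sin_arcsin hy.1 hy.2]
  have hmem : ∀ k, ((θ k)⁻¹, y) ∈
      {p : ℝ × ℝ | ∃ t : ℝ, 0 < t ∧ t ≤ 1 ∧ p = (t, Real.sin (1 / t))} := by
    intro k
    refine ⟨(θ k)⁻¹, inv_pos.mpr (hθpos k), ?_, by rw [hsin k]⟩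
    rw [inv_le_one_iff₀]
    right; linarith [hθge k]
  apply mem_closure_of_tendsto (x := (0, y))
    (f := fun k : ℕ => (((θ k)⁻¹, y) : ℝ × ℝ)) (b := atTop)
  · apply Tendsto.prodMk_nhds _ tendsto_const_nhds
    have : Tendsto θ atTop atTop := by
      apply tendsto_atTop_mono hθge
      have h1 : Tendsto (fun k : ℕ => ((k:ℝ) + 1)) atTop atTop :=
        (tendsto_natCast_atTop_atTop (R := ℝ)).atTop_add tendsto_const_nhds
      exact h1
    exact this.inv_tendsto_atTop
  · exact Eventually.of_forall (fun k => hmem k)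

lemma origin_mem_sineCurve : ((0, 0) : ℝ × ℝ) ∈ sineCurve :=
  vert_mem_sineCurve ⟨by norm_num, by norm_num⟩

lemma one_mem_sineCurve : ((1, Real.sin 1) : ℝ × ℝ) ∈ sineCurve := by
  have := mem_sineCurve_graph (t := 1) one_pos le_rfl
  simpa using this


-- key trig identities
lemma sin_theta_eq (n : ℕ) {y : ℝ} (h1 : -1 ≤ y) (h2 : y ≤ 1) :
    Real.sin (2*π*n + π - Real.arcsin y) = y := by
  have : 2*π*(n:ℝ) + π - Real.arcsin y = (π - Real.arcsin y) + n * (2*π) := by ring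
  rw [this, Real.sin_add_nat_mul_two_pi, Real.sin_pi_sub, Real.sin_arcsin h1 h2]

lemma theta_arcsin_eq (n : ℕ) {θ : ℝ} (h1 : 2*π*n + π/2 ≤ θ) (h2 : θ ≤ 2*π*n + 3*π/2) :
    2*π*n + π - Real.arcsin (Real.sin θ) = θ := by
  set s : ℝ := 2*π*n + π - θ with hs
  have hsge : -(π/2) ≤ s := by simp only [hs]; linarith
  have hsle : s ≤ π/2 := by simp only [hs]; linarith
  have hsin : Real.sin θ = Real.sin s := by
    have : θ = (π - s) + n * (2*π) := by simp only [hs]; ring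
    rw [this, Real.sin_add_nat_mul_two_pi, Real.sin_pi_sub]
  rw [hsin, Real.arcsin_sin hsge hsle]
  simp only [hs]; ring

/-- the approximate retraction of the plane onto the sine curve -/
def rho (n : ℕ) (p : ℝ × ℝ) : ℝ × ℝ :=
  ((rhoTheta n p)⁻¹, Real.sin (rhoTheta n p))
where
  /-- the angle coordinate -/
  rhoTheta (n : ℕ) (p : ℝ × ℝ) : ℝ :=
    (min 1 (max 0 (((2*π*n + π/2)⁻¹ - p.1) / ((2*π*n + π/2)⁻¹ - (2*π*n + 3*π/2)⁻¹))))
      * (2*π*n + π - Real.arcsin (max (-1) (min 1 p.2)))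
    + (1 - min 1 (max 0 (((2*π*n + π/2)⁻¹ - p.1) / ((2*π*n + π/2)⁻¹ - (2*π*n + 3*π/2)⁻¹))))
      * (max ((2*π*n + 3*π/2)⁻¹) (min 1 p.1))⁻¹

lemma pi_facts (n : ℕ) : (0:ℝ) < 2*π*n + π/2 ∧ (2*π*n + π/2 : ℝ) < 2*π*n + 3*π/2 ∧
    ((2*π*n + 3*π/2 : ℝ))⁻¹ < (2*π*n + π/2)⁻¹ ∧ (0:ℝ) < (2*π*n + 3*π/2)⁻¹ ∧
    ((2*π*n + 3*π/2 : ℝ))⁻¹ ≤ 1 ∧ ((2*π*n + π/2 : ℝ))⁻¹ ≤ 1 := by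
  have hπ := Real.pi_gt_three
  have hn : (0:ℝ) ≤ (n:ℝ) := Nat.cast_nonneg n
  have h0 : (0:ℝ) < 2*π*n + π/2 := by nlinarith
  have h1 : (2*π*n + π/2 : ℝ) < 2*π*n + 3*π/2 := by nlinarith
  have h2 : ((2*π*n + 3*π/2 : ℝ))⁻¹ < (2*π*n + π/2)⁻¹ := by
    apply inv_strictAnti₀ h0 h1
  have h3 : (0:ℝ) < (2*π*n + 3*π/2)⁻¹ := by positivity
  have h4 : ((2*π*n + 3*π/2 : ℝ))⁻¹ ≤ 1 := by
    rw [inv_le_one_iff₀]; right; nlinarith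
  have h5 : ((2*π*n + π/2 : ℝ))⁻¹ ≤ 1 := by
    rw [inv_le_one_iff₀]; right; nlinarith
  exact ⟨h0, h1, h2, h3, h4, h5⟩

lemma theta_bounds (n : ℕ) (p : ℝ × ℝ) :
    1 ≤ rho.rhoTheta n p ∧ rho.rhoTheta n p ≤ 2*π*n + 3*π/2 := by
  have hπ := Real.pi_gt_three
  have hn : (0:ℝ) ≤ (n:ℝ) := Nat.cast_nonneg n
  obtain ⟨h0, h1, h2, h3, h4, h5⟩ := pi_facts n
  set lam := min 1 (max 0 (((2*π*(n:ℝ) + π/2)⁻¹ - p.1) / ((2*π*n + π/2)⁻¹ - (2*π*n + 3*π/2)⁻¹)))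
    with hlam
  have hlam0 : 0 ≤ lam := le_min (by norm_num) (le_max_left _ _)
  have hlam1 : lam ≤ 1 := min_le_left _ _
  set A := 2*π*(n:ℝ) + π - Real.arcsin (max (-1) (min 1 p.2)) with hA
  have hAlb : 2*π*(n:ℝ) + π/2 ≤ A := by
    have := Real.arcsin_le_pi_div_two (max (-1) (min 1 p.2))
    simp only [hA]; linarith
  have hAub : A ≤ 2*π*(n:ℝ) + 3*π/2 := by
    have := Real.neg_pi_div_two_le_arcsin (max (-1) (min 1 p.2))
    simp only [hA]; linarith
  set x := max ((2*π*(n:ℝ) + 3*π/2)⁻¹) (min 1 p.1) with hx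
  have hxlb : (2*π*(n:ℝ) + 3*π/2)⁻¹ ≤ x := le_max_left _ _
  have hxub : x ≤ 1 := max_le h4 (min_le_left _ _)
  have hx0 : 0 < x := lt_of_lt_of_le h3 hxlb
  have hxi1 : 1 ≤ x⁻¹ := (one_le_inv₀ hx0).mpr hxub
  have hxi2 : x⁻¹ ≤ 2*π*(n:ℝ) + 3*π/2 := by
    rw [inv_le_comm₀ hx0 (by nlinarith)]
    exact hxlb
  have hA1 : 1 ≤ A := by nlinarith
  have expand : rho.rhoTheta n p = lam * A + (1 - lam) * x⁻¹ := rfl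
  constructor
  · rw [expand]; nlinarith
  · rw [expand]; nlinarith

lemma rho_mem (n : ℕ) (p : ℝ × ℝ) : rho n p ∈ sineCurve := by
  obtain ⟨h1, h2⟩ := theta_bounds n p
  have hpos : 0 < rho.rhoTheta n p := lt_of_lt_of_le one_pos h1
  have := mem_sineCurve_graph (t := (rho.rhoTheta n p)⁻¹)
    (inv_pos.mpr hpos) (inv_le_one_of_one_le₀ h1)
  rw [one_div, inv_inv] at this
  exact this

lemma rho_continuous (n : ℕ) : Continuous (rho n) := by
  obtain ⟨h0, h1, h2, h3, h4, h5⟩ := pi_facts n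
  have hlam : Continuous (fun p : ℝ × ℝ =>
      min 1 (max 0 (((2*π*(n:ℝ) + π/2)⁻¹ - p.1) / ((2*π*n + π/2)⁻¹ - (2*π*n + 3*π/2)⁻¹)))) := by
    fun_prop
  have hA : Continuous (fun p : ℝ × ℝ => 2*π*(n:ℝ) + π - Real.arcsin (max (-1) (min 1 p.2))) := by
    apply Continuous.sub continuous_const
    exact Real.continuous_arcsin.comp ((continuous_const.max (continuous_const.min continuous_snd)))
  have hxinv : Continuous (fun p : ℝ × ℝ => (max ((2*π*(n:ℝ) + 3*π/2)⁻¹) (min 1 p.1))⁻¹) := by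
    apply Continuous.inv₀
    · exact continuous_const.max (continuous_const.min continuous_fst)
    · intro p
      exact ne_of_gt (lt_of_lt_of_le h3 (le_max_left _ _))
  have hΘ : Continuous (rho.rhoTheta n) := by
    exact (hlam.mul hA).add ((continuous_const.sub hlam).mul hxinv)
  have hΘne : ∀ p, rho.rhoTheta n p ≠ 0 := fun p =>
    ne_of_gt (lt_of_lt_of_le one_pos (theta_bounds n p).1)
  exact (hΘ.inv₀ hΘne).prodMk (Real.continuous_sin.comp hΘ)

lemma rho_dist {p : ℝ × ℝ} (n : ℕ) (hp : p ∈ sineCurve) :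
    dist (rho n p) p ≤ (2*π*n + π/2)⁻¹ := by
  obtain ⟨h0, h1, h2, h3, h4, h5⟩ := pi_facts n
  have hbd := sineCurve_subset hp
  have hy1 : -1 ≤ p.2 := hbd.2.1
  have hy2 : p.2 ≤ 1 := hbd.2.2
  have hyhat : max (-1) (min 1 p.2) = p.2 := by
    rw [min_eq_right hy2, max_eq_right hy1]
  set b : ℝ := (2*π*(n:ℝ) + π/2)⁻¹ with hb
  set a : ℝ := (2*π*(n:ℝ) + 3*π/2)⁻¹ with ha
  have hb0 : 0 < b := lt_trans h3 h2
  have hba : 0 < b - a := sub_pos.mpr h2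
  have ha0 : 0 < a := h3
  set lam : ℝ := min 1 (max 0 ((b - p.1) / (b - a))) with hlam
  set A : ℝ := 2*π*(n:ℝ) + π - Real.arcsin p.2 with hA
  have hΘdef : rho.rhoTheta n p = lam * A + (1 - lam) * (max a (min 1 p.1))⁻¹ := by
    show (min 1 (max 0 (((2*π*(n:ℝ) + π/2)⁻¹ - p.1) / ((2*π*n + π/2)⁻¹ - (2*π*n + 3*π/2)⁻¹))))
        * (2*π*n + π - Real.arcsin (max (-1) (min 1 p.2)))
      + (1 - min 1 (max 0 (((2*π*n + π/2)⁻¹ - p.1) / ((2*π*n + π/2)⁻¹ - (2*π*n + 3*π/2)⁻¹))))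
        * (max ((2*π*n + 3*π/2)⁻¹) (min 1 p.1))⁻¹ = _
    rw [hyhat, ← hb, ← ha, ← hlam, ← hA]
  have hrho : rho n p = ((rho.rhoTheta n p)⁻¹, Real.sin (rho.rhoTheta n p)) := rfl
  have hAlb : 2*π*(n:ℝ) + π/2 ≤ A := by
    have := Real.arcsin_le_pi_div_two p.2
    simp only [hA]; linarith
  have hAub : A ≤ 2*π*(n:ℝ) + 3*π/2 := by
    have := Real.neg_pi_div_two_le_arcsin p.2
    simp only [hA]; linarith
  have hA0 : 0 < A := lt_of_lt_of_le h0 hAlb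
  have hAinv : A⁻¹ ≤ b := by
    rw [hb, inv_le_inv₀ hA0 h0]
    exact hAlb
  have hAinv0 : 0 < A⁻¹ := inv_pos.mpr hA0
  rcases eq_or_lt_of_le hbd.1.1 with hx0 | hx0
  · -- p.1 = 0 : lam = 1
    have hr : (1:ℝ) ≤ (b - p.1) / (b - a) := by
      rw [le_div_iff₀ hba, ← hx0]; linarith
    have hlam1 : lam = 1 := by
      rw [hlam, min_eq_left]
      exact le_max_of_le_right hr
    have hΘ : rho.rhoTheta n p = A := by rw [hΘdef, hlam1]; ring
    have hsinA : Real.sin A = p.2 := sin_theta_eq n hy1 hy2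
    rw [hrho, hΘ, Prod.dist_eq, hsinA]
    apply max_le
    · rw [Real.dist_eq, ← hx0, sub_zero, abs_of_pos hAinv0]; exact hAinv
    · simp [hb0.le]
  · -- p.1 > 0
    obtain ⟨hp1, hp2⟩ := sineCurve_snd_eq hp hx0
    have hmin : min 1 p.1 = p.1 := min_eq_right hp1
    rcases le_or_gt b p.1 with hc | hc
    · -- identity region
      have hr : (b - p.1) / (b - a) ≤ 0 :=
        div_nonpos_of_nonpos_of_nonneg (by linarith) hba.le
      have hlam0 : lam = 0 := by
        rw [hlam, max_eq_left hr, min_eq_right zero_le_one]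
      have hxx : max a (min 1 p.1) = p.1 := by
        rw [hmin, max_eq_right (le_trans h2.le hc)]
      have hΘ : rho.rhoTheta n p = p.1⁻¹ := by rw [hΘdef, hlam0, hxx]; ring
      have : rho n p = p := by
        rw [hrho, hΘ, inv_inv]
        conv_rhs => rw [← Prod.mk.eta (p := p)]
        rw [Prod.mk.injEq]
        exact ⟨rfl, by rw [hp2, one_div]⟩
      rw [this, dist_self]; exact hb0.le
    · rcases le_or_gt a p.1 with hc2 | hc2
      · -- exact blend region
        have hxx : max a (min 1 p.1) = p.1 := by rw [hmin, max_eq_right hc2]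
        have hi1 : 2*π*(n:ℝ) + π/2 ≤ p.1⁻¹ := by
          rw [hb] at hc
          rw [← inv_inv (2*π*(n:ℝ) + π/2)]
          exact inv_anti₀ hx0 hc.le
        have hi2 : p.1⁻¹ ≤ 2*π*(n:ℝ) + 3*π/2 := by
          rw [← inv_inv (2*π*(n:ℝ) + 3*π/2)]
          exact inv_anti₀ h3 hc2
        have hAeq : A = p.1⁻¹ := by
          rw [hA, hp2, one_div]
          exact theta_arcsin_eq n hi1 hi2
        have hΘ : rho.rhoTheta n p = p.1⁻¹ := by rw [hΘdef, hxx, hAeq]; ring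
        have : rho n p = p := by
          rw [hrho, hΘ, inv_inv]
          conv_rhs => rw [← Prod.mk.eta (p := p)]
          rw [Prod.mk.injEq]
          exact ⟨rfl, by rw [hp2, one_div]⟩
        rw [this, dist_self]; exact hb0.le
      · -- left region: lam = 1
        have hr : (1:ℝ) ≤ (b - p.1) / (b - a) := by
          rw [le_div_iff₀ hba]; linarith
        have hlam1 : lam = 1 := by
          rw [hlam, min_eq_left]
          exact le_max_of_le_right hr
        have hΘ : rho.rhoTheta n p = A := by rw [hΘdef, hlam1]; ring
        have hsinA : Real.sin A = p.2 := sin_theta_eq n hy1 hy2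
        rw [hrho, hΘ, Prod.dist_eq, hsinA]
        apply max_le
        · rw [Real.dist_eq, abs_sub_le_iff]
          constructor
          · linarith
          · linarith [h2, hAinv0]
        · simp [hb0.le]


-- ## Part 3 : AAR

lemma tendstoUniformlyCompat_of_metric {Z X : Type*} [m₀ : MetricSpace X]
    [CompactSpace X] {F : ℕ → Z → X} {f : Z → X}
    (h : TendstoUniformly F f atTop) : TendstoUniformlyCompat F f := by
  intro m hm
  have huni : m.toUniformSpace = m₀.toUniformSpace := by
    refine @unique_uniformity_of_compact X m₀.toUniformSpace.toTopologicalSpace ?_ _ _ hm rfl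
    infer_instance
  rw [huni]
  exact h

lemma sineCurve_isAAR : IsAAR sineCurve := by
  intro Y _ _ _ ι hι hclosed
  haveI : CompactSpace sineCurve := isCompact_iff_compactSpace.mp sineCurve_isCompact
  letI : MetricSpace Y := TopologicalSpace.metrizableSpaceMetric Y
  let e : sineCurve ≃ₜ Set.range ι := hι.toHomeomorph
  let f : C(Set.range ι, ℝ × ℝ) :=
    ⟨fun z => ((e.symm z : sineCurve) : ℝ × ℝ),
      continuous_subtype_val.comp e.symm.continuous⟩
  obtain ⟨g, hg⟩ := f.exists_restrict_eq hclosed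
  have hgι : ∀ x : sineCurve, g (ι x) = (x : ℝ × ℝ) := by
    intro x
    have h1 : g (ι x) = f ⟨ι x, Set.mem_range_self x⟩ := by
      have := congrArg (fun F : C(Set.range ι, ℝ × ℝ) => F ⟨ι x, Set.mem_range_self x⟩) hg
      simpa using this
    rw [h1]
    show ((e.symm ⟨ι x, Set.mem_range_self x⟩ : sineCurve) : ℝ × ℝ) = _
    have h2 : (⟨ι x, Set.mem_range_self x⟩ : Set.range ι) = e x := rfl
    rw [h2, e.symm_apply_apply]
  refine ⟨fun n y => ⟨rho n (g y), rho_mem n (g y)⟩, fun n => ?_, ?_⟩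
  · exact Continuous.subtype_mk ((rho_continuous n).comp g.continuous) _
  · apply tendstoUniformlyCompat_of_metric
    rw [Metric.tendstoUniformly_iff]
    intro ε hε
    obtain ⟨N, hN⟩ := exists_nat_gt ε⁻¹
    filter_upwards [eventually_ge_atTop N] with n hn x
    have hπ := Real.pi_gt_three
    have hb : (2*π*(n:ℝ) + π/2)⁻¹ < ε := by
      have hNn : (N:ℝ) ≤ (n:ℝ) := Nat.cast_le.mpr hn
      have h1 : ε⁻¹ < 2*π*(n:ℝ) + π/2 := by nlinarith [Nat.cast_nonneg (α := ℝ) n]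
      have h2 : (0:ℝ) < 2*π*(n:ℝ) + π/2 := lt_trans (inv_pos.mpr hε) h1
      calc (2*π*(n:ℝ) + π/2)⁻¹ < (ε⁻¹)⁻¹ := by
            apply inv_strictAnti₀ (inv_pos.mpr hε) h1
        _ = ε := inv_inv ε
    have hdist : dist (id x) (⟨rho n (g (ι x)), rho_mem n (g (ι x))⟩ : sineCurve)
        = dist (rho n ((x : ℝ × ℝ))) ((x : ℝ × ℝ)) := by
      rw [Subtype.dist_eq]
      simp only [id_eq, hgι x]
      exact dist_comm _ _
    calc dist (id x) (⟨rho n (g (ι x)), rho_mem n (g (ι x))⟩ : sineCurve)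
        = dist (rho n ((x : ℝ × ℝ))) ((x : ℝ × ℝ)) := hdist
      _ ≤ (2*π*(n:ℝ) + π/2)⁻¹ := rho_dist n x.2
      _ < ε := hb


-- ## Part 4 : not AR

lemma sin_two_pi_nat_add_pi_div_two (N : ℕ) : Real.sin (2*π*N + π/2) = 1 := by
  have : 2*π*(N:ℝ) + π/2 = π/2 + N * (2*π) := by ring
  rw [this, Real.sin_add_nat_mul_two_pi, Real.sin_pi_div_two]

lemma sin_two_pi_nat_add_three_pi_div_two (N : ℕ) : Real.sin (2*π*N + 3*π/2) = -1 := by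
  have : 2*π*(N:ℝ) + 3*π/2 = (π - (-(π/2))) + N * (2*π) := by ring
  rw [this, Real.sin_add_nat_mul_two_pi, Real.sin_pi_sub, Real.sin_neg, Real.sin_pi_div_two]

lemma sineCurve_not_joined :
    ¬ Joined (⟨(0,0), origin_mem_sineCurve⟩ : sineCurve)
      ⟨(1, Real.sin 1), one_mem_sineCurve⟩ := by
  rintro ⟨γ⟩
  have hπ := Real.pi_gt_three
  set D : ℝ → ℝ × ℝ := fun s => ((γ.extend s : sineCurve) : ℝ × ℝ) with hD
  have hDc : Continuous D := continuous_subtype_val.comp γ.continuous_extend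
  have hDmem : ∀ s, D s ∈ sineCurve := fun s => (γ.extend s).2
  have hD0 : D 0 = (0, 0) := by
    simp only [hD, Path.extend_zero]
  have hD1 : D 1 = (1, Real.sin 1) := by
    simp only [hD, Path.extend_one]
  set A : Set ℝ := Icc (0:ℝ) 1 ∩ {s | (D s).1 = 0} with hA
  have hAc : IsCompact A :=
    isCompact_Icc.inter_right (isClosed_eq (continuous_fst.comp hDc) continuous_const)
  have hAne : A.Nonempty := ⟨0, ⟨le_rfl, zero_le_one⟩, by rw [mem_setOf_eq, hD0]⟩
  set s₀ : ℝ := sSup A with hs₀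
  have hs₀A : s₀ ∈ A := hAc.sSup_mem hAne
  have hs₀1 : s₀ < 1 := by
    rcases lt_or_eq_of_le hs₀A.1.2 with h | h
    · exact h
    · exfalso
      have := hs₀A.2
      rw [mem_setOf_eq, h, hD1] at this
      norm_num at this
  have hs₀0 : 0 ≤ s₀ := hs₀A.1.1
  have hDs₀ : (D s₀).1 = 0 := hs₀A.2
  have hpos : ∀ c, c ∈ Ioc s₀ 1 → 0 < (D c).1 := by
    intro c hc
    have hcI : c ∈ Icc (0:ℝ) 1 := ⟨le_trans hs₀0 hc.1.le, hc.2⟩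
    rcases (sineCurve_subset (hDmem c)).1.1.lt_or_eq with h | h
    · exact h
    · exfalso
      have hcA : c ∈ A := ⟨hcI, h.symm⟩
      exact absurd (le_csSup hAc.bddAbove hcA) (not_le.mpr hc.1)
  -- key step : hitting prescribed second coordinates arbitrarily close to s₀
  have key : ∀ w : ℝ, (∀ N : ℕ, ∃ θ : ℝ, 2*π*N + π/2 ≤ θ ∧ θ ≤ 2*π*N + 3*π/2 ∧
      Real.sin θ = w) → ∀ c ∈ Ioc s₀ 1, ∃ s ∈ Ioc s₀ c, (D s).2 = w := by
    intro w hw c hc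
    have hm0 : 0 < (D c).1 := hpos c hc
    have hm1 : (D c).1 ≤ 1 := (sineCurve_subset (hDmem c)).1.2
    obtain ⟨N, hN⟩ := exists_nat_ge ((D c).1)⁻¹
    obtain ⟨θ, hθ1, hθ2, hθ3⟩ := hw N
    have hθpos : 0 < θ := by nlinarith [Nat.cast_nonneg (α := ℝ) N]
    set v : ℝ := θ⁻¹ with hv
    have hv0 : 0 < v := inv_pos.mpr hθpos
    have hvm : v ≤ (D c).1 := by
      have h1 : ((D c).1)⁻¹ ≤ θ := by nlinarith [Nat.cast_nonneg (α := ℝ) N]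
      calc v = θ⁻¹ := rfl
        _ ≤ (((D c).1)⁻¹)⁻¹ := inv_anti₀ (inv_pos.mpr hm0) h1
        _ = (D c).1 := inv_inv _
    have hIVT := intermediate_value_Icc hc.1.le ((continuous_fst.comp hDc).continuousOn
      (s := Icc s₀ c))
    have hvmem : v ∈ Icc ((Prod.fst ∘ D) s₀) ((Prod.fst ∘ D) c) := by
      constructor
      · show (D s₀).1 ≤ v
        rw [hDs₀]; exact hv0.le
      · exact hvm
    obtain ⟨s, hsI, hsv'⟩ := hIVT hvmem
    have hsv : (D s).1 = v := hsv'
    have hs0 : s₀ < s := by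
      rcases lt_or_eq_of_le hsI.1 with h | h
      · exact h
      · exfalso
        rw [← h, hDs₀] at hsv
        exact absurd hsv.symm (ne_of_gt hv0)
    refine ⟨s, ⟨hs0, hsI.2⟩, ?_⟩
    have hsnd := (sineCurve_snd_eq (hDmem s) (by rw [hsv]; exact hv0)).2
    rw [hsnd, hsv, hv, one_div, inv_inv, hθ3]
  have key1 : ∀ c ∈ Ioc s₀ 1, ∃ s ∈ Ioc s₀ c, (D s).2 = 1 := by
    apply key
    intro N
    exact ⟨2*π*N + π/2, le_rfl, by nlinarith, sin_two_pi_nat_add_pi_div_two N⟩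
  have key2 : ∀ c ∈ Ioc s₀ 1, ∃ s ∈ Ioc s₀ c, (D s).2 = -1 := by
    apply key
    intro N
    exact ⟨2*π*N + 3*π/2, by nlinarith, le_rfl, sin_two_pi_nat_add_three_pi_div_two N⟩
  -- the approximating sequence of parameters
  set c : ℕ → ℝ := fun k => s₀ + (1 - s₀) / (k + 1) with hc
  have hcmem : ∀ k, c k ∈ Ioc s₀ 1 := by
    intro k
    constructor
    · have : (0:ℝ) < (1 - s₀) / (k + 1) := by
        apply div_pos (by linarith) (by positivity)
      simp only [hc]; linarith
    · have h1 : (1 - s₀) / ((k:ℝ) + 1) ≤ (1 - s₀) / 1 := by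
        apply div_le_div_of_nonneg_left (by linarith) one_pos (by exact_mod_cast Nat.le_add_left 1 k)
      simp only [hc]
      rw [div_one] at h1
      linarith
  have hctend : Tendsto c atTop (𝓝 s₀) := by
    have h1 : Tendsto (fun k : ℕ => (1 - s₀) * (1 / ((k:ℝ) + 1))) atTop (𝓝 ((1 - s₀) * 0)) :=
      tendsto_const_nhds.mul tendsto_one_div_add_atTop_nhds_zero_nat
    have h2 : Tendsto (fun k : ℕ => s₀ + (1 - s₀) * (1 / ((k:ℝ) + 1))) atTop (𝓝 (s₀ + (1 - s₀) * 0)) :=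
      tendsto_const_nhds.add h1
    have h3 : (fun k : ℕ => s₀ + (1 - s₀) * (1 / ((k:ℝ) + 1))) = c := by
      funext k; simp only [hc]; ring
    rw [h3] at h2
    simpa using h2
  have lim : ∀ w : ℝ, (∀ c' ∈ Ioc s₀ 1, ∃ s ∈ Ioc s₀ c', (D s).2 = w) → (D s₀).2 = w := by
    intro w hw
    choose u hu h2u using fun k => hw (c k) (hcmem k)
    have hutend : Tendsto u atTop (𝓝 s₀) := by
      apply tendsto_of_tendsto_of_tendsto_of_le_of_le tendsto_const_nhds hctend
      · exact fun k => (hu k).1.le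
      · exact fun k => (hu k).2
    have h4 : Tendsto (fun k => (D (u k)).2) atTop (𝓝 ((D s₀).2)) :=
      ((continuous_snd.comp hDc).continuousAt).tendsto.comp hutend
    have h5 : (fun k => (D (u k)).2) = fun _ => w := funext h2u
    rw [h5] at h4
    exact tendsto_nhds_unique h4 tendsto_const_nhds
  have e1 : (D s₀).2 = 1 := lim 1 key1
  have e2 : (D s₀).2 = -1 := lim (-1) key2
  rw [e1] at e2
  norm_num at e2

lemma sineCurve_not_isAR : ¬ IsAR sineCurve := by
  intro h
  set K : Set (ℝ × ℝ) := Icc (0:ℝ) 1 ×ˢ Icc (-1:ℝ) 1 with hK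
  have hKsub : sineCurve ⊆ K := sineCurve_subset
  haveI : CompactSpace K := isCompact_iff_compactSpace.mp (isCompact_Icc.prod isCompact_Icc)
  haveI : MetrizableSpace (ULift.{u_1} ↥K) := Topology.IsEmbedding.uliftDown.metrizableSpace
  set ι : sineCurve → ULift.{u_1} ↥K := fun x => ULift.up (Set.inclusion hKsub x) with hι
  have hemb : Topology.IsEmbedding ι := by
    apply Topology.IsEmbedding.comp
    · exact (Homeomorph.ulift (X := ↥K)).symm.isEmbedding
    · exact Topology.IsEmbedding.inclusion hKsub
  have hcl : IsClosed (Set.range ι) := by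
    have h1 : Set.range ι = ULift.up '' (Set.range (Set.inclusion hKsub)) :=
      Set.range_comp ULift.up (Set.inclusion hKsub)
    rw [h1]
    apply (Homeomorph.ulift (X := ↥K)).symm.isClosedMap
    rw [Set.range_inclusion]
    exact sineCurve_isClosed.preimage continuous_subtype_val
  obtain ⟨r, hr, hrι⟩ := h (ULift.{u_1} ↥K) ι hemb hcl
  have hKpc : IsPathConnected K := by
    apply Convex.isPathConnected ((convex_Icc _ _).prod (convex_Icc _ _))
    exact ⟨((0:ℝ), (0:ℝ)), ⟨⟨le_rfl, zero_le_one⟩, ⟨by norm_num, by norm_num⟩⟩⟩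
  haveI hKpcs : PathConnectedSpace K := isPathConnected_iff_pathConnectedSpace.mp hKpc
  haveI hUpcs : PathConnectedSpace (ULift.{u_1} ↥K) := by
    rw [pathConnectedSpace_iff_univ]
    have h2 : (univ : Set (ULift.{u_1} ↥K)) = ULift.up '' univ := by
      rw [image_univ]
      exact (Set.range_eq_univ.mpr ULift.up_surjective).symm
    rw [h2]
    exact (pathConnectedSpace_iff_univ.mp hKpcs).image
      (Homeomorph.ulift (X := ↥K)).symm.continuous
  haveI hpcs : PathConnectedSpace sineCurve := by
    rw [pathConnectedSpace_iff_univ]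
    have himg : (univ : Set sineCurve) = r '' univ := by
      apply Subset.antisymm
      · intro x _
        exact ⟨ι x, mem_univ _, hrι x⟩
      · exact fun _ _ => mem_univ _
    rw [himg]
    exact (pathConnectedSpace_iff_univ.mp hUpcs).image hr
  exact sineCurve_not_joined (PathConnectedSpace.joined _ _)

theorem statement3 : IsAAR sineCurve ∧ ¬ IsAR sineCurve :=
  ⟨sineCurve_isAAR, sineCurve_not_isAR⟩

end
end

section
/- Let X be a locally compact, second countable, metrizable Hausdorff space. If the C*-algebra C₀(X, ℂ) of continuous complex-valued functions on X vanishing at infinity is weakly projective, then the one-point compactification X⁺ of X, together with the point ∞ at infinity, is a pointed approximative absolute retract. -/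
open Filter Topology Set TopologicalSpace

open Filter Topology TopologicalSpace

/-- A C⋆-algebra `A` is weakly projective if for all C⋆-algebras `B` and `C`,
every surjective ⋆-homomorphism `ρ : B → C` and every ⋆-homomorphism
`φ : A → C`, there is a sequence of ⋆-homomorphisms `φₙ : A → B` with
`‖ρ (φₙ a) − φ a‖ → 0` for every `a ∈ A`. -/
def WeaklyProjective (A : Type*) [NonUnitalCStarAlgebra A] : Prop :=
  ∀ (B C : Type*) [NonUnitalCStarAlgebra B] [NonUnitalCStarAlgebra C]
    (ρ : B →⋆ₙₐ[ℂ] C), Function.Surjective ρ →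
    ∀ φ : A →⋆ₙₐ[ℂ] C, ∃ φₙ : ℕ → (A →⋆ₙₐ[ℂ] B),
      ∀ a : A, Tendsto (fun n => ‖ρ (φₙ n a) - φ a‖) atTop (𝓝 0)

/-- A C⋆-algebra `A` is weakly projective with respect to unital C⋆-algebras
if for all unital C⋆-algebras `B` and `C`, every unital surjective
⋆-homomorphism `ρ : B → C` and every ⋆-homomorphism `φ : A → C`, there is a
sequence of ⋆-homomorphisms `φₙ : A → B` with `‖ρ (φₙ a) − φ a‖ → 0` for every
`a ∈ A`. -/
def WeaklyProjectiveWrtUnital (A : Type*) [NonUnitalCStarAlgebra A] : Prop :=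
  ∀ (B C : Type*) [CStarAlgebra B] [CStarAlgebra C]
    (ρ : B →⋆ₐ[ℂ] C), Function.Surjective ρ →
    ∀ φ : A →⋆ₙₐ[ℂ] C, ∃ φₙ : ℕ → (A →⋆ₙₐ[ℂ] B),
      ∀ a : A, Tendsto (fun n => ‖ρ (φₙ n a) - φ a‖) atTop (𝓝 0)


open ZeroAtInfty OnePoint

section Aux

variable {X : Type*} [TopologicalSpace X] [T2Space X] [LocallyCompactSpace X]

/-- Extension by zero to the one-point compactification. -/
noncomputable def extZero (a : C₀(X, ℂ)) : C(OnePoint X, ℂ) :=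
  OnePoint.continuousMapMk a.toContinuousMap 0
    (by rw [Filter.coclosedCompact_eq_cocompact]; exact zero_at_infty a)

@[simp] lemma extZero_coe (a : C₀(X, ℂ)) (x : X) : extZero a (x : OnePoint X) = a x := rfl
@[simp] lemma extZero_infty (a : C₀(X, ℂ)) : extZero a ∞ = 0 := rfl

lemma extZero_zero : extZero (0 : C₀(X, ℂ)) = 0 := by
  ext z; cases z <;> simp

lemma extZero_add (a b : C₀(X, ℂ)) : extZero (a + b) = extZero a + extZero b := by
  ext z; cases z <;> simp

lemma extZero_mul (a b : C₀(X, ℂ)) : extZero (a * b) = extZero a * extZero b := by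
  ext z; cases z <;> simp

lemma extZero_smul (c : ℂ) (a : C₀(X, ℂ)) : extZero (c • a) = c • extZero a := by
  ext z; cases z <;> simp

lemma extZero_star (a : C₀(X, ℂ)) : extZero (star a) = star (extZero a) := by
  ext z; cases z <;> simp

/-- Restriction of a continuous function on the one-point compactification,
renormalized to vanish at infinity. -/
noncomputable def restr (f : C(OnePoint X, ℂ)) : C₀(X, ℂ) where
  toFun := fun x => f x - f ∞
  continuous_toFun := (f.continuous.comp OnePoint.continuous_coe).sub continuous_const
  zero_at_infty' := by
    have h1 : Tendsto (fun x : X => f x) (coclosedCompact X) (𝓝 (f ∞)) :=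
      OnePoint.continuousAt_infty'.mp f.continuous.continuousAt
    have h2 : Tendsto (fun x : X => f x) (cocompact X) (𝓝 (f ∞)) :=
      h1.mono_left Filter.cocompact_le_coclosedCompact
    simpa using h2.sub_const (f ∞)

@[simp] lemma restr_apply (f : C(OnePoint X, ℂ)) (x : X) : restr f x = f x - f ∞ := rfl

lemma restr_extZero (a : C₀(X, ℂ)) : restr (extZero a) = a := by
  ext x; simp

lemma restr_one : restr (1 : C(OnePoint X, ℂ)) = 0 := by
  ext x; simp

lemma restr_add (f g : C(OnePoint X, ℂ)) : restr (f + g) = restr f + restr g := by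
  ext x; simp; ring

lemma restr_smul (c : ℂ) (f : C(OnePoint X, ℂ)) : restr (c • f) = c • restr f := by
  ext x; simp; ring

lemma restr_mul (f g : C(OnePoint X, ℂ)) :
    restr (f * g) = f ∞ • restr g + g ∞ • restr f + restr f * restr g := by
  ext x; simp; ring

lemma restr_algebraMap (c : ℂ) : restr ((algebraMap ℂ C(OnePoint X, ℂ)) c) = 0 := by
  ext x; simp

/-- A bump function in `C₀`. -/
lemma exists_bump (x : X) (t : Set X) (ht : IsClosed t) (hx : x ∉ t) :
    ∃ a : C₀(X, ℂ), a x = 1 ∧ ∀ y ∈ t, a y = 0 := by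
  obtain ⟨f, hf1, hf0, hfc, -⟩ := exists_continuous_one_zero_of_isCompact
    isCompact_singleton ht (disjoint_singleton_left.mpr hx)
  have hc : HasCompactSupport (fun y => (f y : ℂ)) :=
    hfc.comp_left (g := (Complex.ofReal)) Complex.ofReal_zero
  refine ⟨{ toFun := fun y => (f y : ℂ)
            continuous_toFun := Complex.continuous_ofReal.comp f.continuous
            zero_at_infty' := hc.is_zero_at_infty }, ?_, ?_⟩
  · simp [hf1 (Set.mem_singleton x)]
  · intro y hy; simp [hf0 hy]

lemma exists_extZero_ne (p q : OnePoint X) (hpq : p ≠ q) :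
    ∃ a : C₀(X, ℂ), extZero a p ≠ extZero a q := by
  cases p with
  | infty =>
    cases q with
    | infty => exact absurd rfl hpq
    | coe x =>
      obtain ⟨a, ha1, -⟩ := exists_bump x ∅ isClosed_empty (Set.notMem_empty x)
      exact ⟨a, by show (0 : ℂ) ≠ a x; rw [ha1]; exact zero_ne_one⟩
  | coe x =>
    cases q with
    | infty =>
      obtain ⟨a, ha1, -⟩ := exists_bump x ∅ isClosed_empty (Set.notMem_empty x)
      exact ⟨a, by show a x ≠ (0 : ℂ); rw [ha1]; exact one_ne_zero⟩
    | coe y =>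
      have hxy : x ≠ y := by rintro rfl; exact hpq rfl
      obtain ⟨a, ha1, ha0⟩ := exists_bump x {y} isClosed_singleton (by simpa using hxy)
      refine ⟨a, ?_⟩
      show a x ≠ a y
      rw [ha1, ha0 y (Set.mem_singleton y)]
      exact one_ne_zero

end Aux

/-- Uniform convergence to the identity on a compactum follows from eventual closeness
for a separating family of functions. -/
lemma tendstoUniformlyCompat_of_sep {Z : Type*} [tZ : TopologicalSpace Z] [CompactSpace Z]
    (S : Set C(Z, ℂ)) (hsep : ∀ p q : Z, p ≠ q → ∃ f ∈ S, f p ≠ f q)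
    (F : ℕ → Z → Z)
    (hF : ∀ f ∈ S, ∀ ε > 0, ∀ᶠ n in atTop, ∀ x, ‖f (F n x) - f x‖ < ε) :
    TendstoUniformlyCompat F id := by
  intro m hm
  letI m' : MetricSpace Z := m.replaceTopology hm.symm
  have hm'm : m' = m := MetricSpace.replaceTopology_eq m hm.symm
  suffices H : @TendstoUniformly Z Z ℕ m'.toUniformSpace F id atTop by
    rw [hm'm] at H; exact H
  refine Metric.tendstoUniformly_iff.mpr ?_
  intro ε hε
  set K : Set (Z × Z) := {p | ε ≤ dist p.1 p.2} with hKdef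
  have hKclosed : IsClosed K := isClosed_le continuous_const continuous_dist
  have hKcomp : IsCompact K := hKclosed.isCompact
  rcases K.eq_empty_or_nonempty with hKe | hKne
  · refine Eventually.of_forall fun n x => ?_
    by_contra hc
    push_neg at hc
    have : (x, F n x) ∈ K := by simpa [hKdef] using hc
    simp [hKe] at this
  · set U : {f // f ∈ S} → Set (Z × Z) := fun f => {p | f.1 p.1 ≠ f.1 p.2} with hUdef
    have hUopen : ∀ f, IsOpen (U f) := fun f =>
      isOpen_ne_fun (f.1.continuous.comp continuous_fst) (f.1.continuous.comp continuous_snd)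
    have hKU : K ⊆ ⋃ f, U f := by
      intro p hp
      have hne : p.1 ≠ p.2 := by
        rintro h
        have : ε ≤ dist p.1 p.2 := hp
        rw [h, dist_self] at this
        linarith
      obtain ⟨f, hfS, hf⟩ := hsep p.1 p.2 hne
      exact mem_iUnion.mpr ⟨⟨f, hfS⟩, hf⟩
    obtain ⟨t, ht⟩ := hKcomp.elim_finite_subcover U hUopen hKU
    set g : Z × Z → ℝ := fun p => ∑ f ∈ t, ‖f.1 p.1 - f.1 p.2‖ with hgdef
    have hgc : Continuous g := continuous_finset_sum _ fun f _ =>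
      ((f.1.continuous.comp continuous_fst).sub (f.1.continuous.comp continuous_snd)).norm
    obtain ⟨p₀, hp₀K, hp₀min⟩ := hKcomp.exists_isMinOn hKne hgc.continuousOn
    have hδpos : 0 < g p₀ := by
      have := ht hp₀K
      simp only [mem_iUnion] at this
      obtain ⟨f, hft, hf⟩ := this
      refine Finset.sum_pos' (fun f _ => norm_nonneg _) ⟨f, hft, ?_⟩
      rw [norm_pos_iff, sub_ne_zero]
      exact hf
    have htne : t.Nonempty := by
      rcases Finset.eq_empty_or_nonempty t with rfl | h
      · simp [hgdef] at hδpos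
      · exact h
    have hev : ∀ᶠ n in atTop, ∀ f ∈ t, ∀ x, ‖f.1 (F n x) - f.1 x‖ < g p₀ / (t.card + 1) := by
      rw [eventually_all_finset]
      intro f hf
      exact hF f.1 f.2 _ (by positivity)
    filter_upwards [hev] with n hn x
    by_contra hc
    push_neg at hc
    have hxK : (x, F n x) ∈ K := by simpa [hKdef] using hc
    have h1 : g (x, F n x) < g p₀ := by
      have hb : ∀ f ∈ t, ‖f.1 x - f.1 (F n x)‖ < g p₀ / (t.card + 1) := by
        intro f hf
        rw [norm_sub_rev]
        exact hn f hf x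
      calc g (x, F n x) = ∑ f ∈ t, ‖f.1 x - f.1 (F n x)‖ := rfl
        _ < ∑ _f ∈ t, g p₀ / (t.card + 1) := Finset.sum_lt_sum_of_nonempty htne hb
        _ = t.card * (g p₀ / (t.card + 1)) := by
            rw [Finset.sum_const, nsmul_eq_mul]
        _ < g p₀ := by
            have hc1 : (0:ℝ) < (t.card : ℝ) + 1 := by positivity
            have h2 : (t.card : ℝ) * (g p₀ / (t.card + 1)) = (t.card * g p₀) / (t.card + 1) := by
              ring
            rw [h2, div_lt_iff₀ hc1]
            nlinarith [hδpos]
    exact absurd (hp₀min hxK) (not_le.mpr h1)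


section ULiftCStar

variable {A : Type*} [NonUnitalCStarAlgebra A]

instance uliftStar : Star (ULift A) := ⟨fun x => ⟨star x.down⟩⟩

@[simp] lemma uliftStar_down (x : ULift A) : (star x).down = star x.down := rfl

instance uliftStarRing : StarRing (ULift A) where
  star_involutive x := ULift.ext _ _ (star_star x.down)
  star_mul x y := ULift.ext _ _ (star_mul x.down y.down)
  star_add x y := ULift.ext _ _ (star_add x.down y.down)

instance uliftCStarRing : CStarRing (ULift A) where
  norm_mul_self_le x := CStarRing.norm_mul_self_le (x := x.down)

instance uliftStarModule : StarModule ℂ (ULift A) where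
  star_smul c x := ULift.ext _ _ (star_smul c x.down)

instance uliftIsScalarTower : IsScalarTower ℂ (ULift A) (ULift A) where
  smul_assoc c x y := ULift.ext _ _ (smul_assoc c x.down y.down)

instance uliftSMulCommClass : SMulCommClass ℂ (ULift A) (ULift A) where
  smul_comm c x y := ULift.ext _ _ (smul_comm c x.down y.down)

noncomputable instance uliftNonUnitalCStarAlgebra : NonUnitalCStarAlgebra (ULift A) where

/-- `ULift.down` as a ⋆-homomorphism. -/
def uliftDownHom : ULift A →⋆ₙₐ[ℂ] A where
  toFun := ULift.down
  map_smul' _ _ := rfl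
  map_zero' := rfl
  map_add' _ _ := rfl
  map_mul' _ _ := rfl
  map_star' _ := rfl

/-- `ULift.up` as a ⋆-homomorphism. -/
def uliftUpHom : A →⋆ₙₐ[ℂ] ULift A where
  toFun := ULift.up
  map_smul' _ _ := rfl
  map_zero' := rfl
  map_add' _ _ := rfl
  map_mul' _ _ := rfl
  map_star' _ := rfl

@[simp] lemma uliftDownHom_apply (x : ULift A) : (uliftDownHom (A := A)) x = x.down := rfl
@[simp] lemma uliftUpHom_apply (x : A) : (uliftUpHom (A := A)) x = ULift.up x := rfl
@[simp] lemma ulift_norm_def (x : ULift A) : ‖x‖ = ‖x.down‖ := rfl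

end ULiftCStar


open ZeroAtInfty OnePoint

set_option maxHeartbeats 2000000 in
open Filter Topology Set TopologicalSpace ZeroAtInfty OnePoint in
theorem statement9 (X : Type*) [TopologicalSpace X] [T2Space X]
    [LocallyCompactSpace X] [SecondCountableTopology X] [MetrizableSpace X]
    (h : WeaklyProjective C₀(X, ℂ)) :
    IsPointedAAR (OnePoint X) (∞ : OnePoint X) := by
  classical
  intro Y _ _ _ ι hemb hcl
  have hι : Continuous ι := hemb.continuous
  -- Embed `Y` into a compactum in `Type 0`.
  obtain ⟨eY, heY⟩ := exists_embedding_l_infty Y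
  let Y₀ : Type := Set.range eY
  haveI : CompactSpace Y₀ := isCompact_iff_compactSpace.mp (isCompact_range heY.continuous)
  let κ : OnePoint X → Y₀ := fun z => ⟨eY (ι z), Set.mem_range_self _⟩
  have hκcont : Continuous κ := (heY.continuous.comp hι).subtype_mk _
  have hκinj : Function.Injective κ := fun a b hab =>
    hemb.injective (heY.injective (congrArg Subtype.val hab))
  -- The image of `OnePoint X` inside `Y₀`.
  let W : Set Y₀ := Set.range κ
  haveI : CompactSpace W := isCompact_iff_compactSpace.mp (isCompact_range hκcont)
  have hWclosed : IsClosed W := (isCompact_range hκcont).isClosed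
  let eZW : OnePoint X ≃ W := Equiv.ofBijective (fun z => ⟨κ z, Set.mem_range_self z⟩)
    ⟨fun a b hab => hκinj (congrArg Subtype.val hab), by rintro ⟨w, z, rfl⟩; exact ⟨z, rfl⟩⟩
  let hZ : OnePoint X ≃ₜ W :=
    Continuous.homeoOfEquivCompactToT2 (f := eZW) (hκcont.subtype_mk _)
  have hZ_val : ∀ z : OnePoint X, ((hZ z : W) : Y₀) = κ z := fun z => rfl
  -- base points
  set y₀ : Y₀ := κ ∞ with hy₀def
  set w₀ : W := hZ ∞ with hw₀def
  have hw₀val : (w₀ : Y₀) = y₀ := rfl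
  -- the ideal `I` of functions on `Y₀` vanishing at `y₀`
  let I : NonUnitalStarSubalgebra ℂ C(Y₀, ℂ) :=
  { carrier := {g | g y₀ = 0}
    add_mem' := by intro g₁ g₂ h1 h2; simp only [Set.mem_setOf_eq, ContinuousMap.add_apply] at *
                   rw [h1, h2, add_zero]
    zero_mem' := by simp [Set.mem_setOf_eq]
    mul_mem' := by intro g₁ g₂ h1 h2; simp only [Set.mem_setOf_eq, ContinuousMap.mul_apply] at *
                   rw [h1, h2, mul_zero]
    smul_mem' := by intro c g hg; simp only [Set.mem_setOf_eq, ContinuousMap.smul_apply] at *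
                    rw [hg, smul_zero]
    star_mem' := by intro g hg; simp only [Set.mem_setOf_eq, ContinuousMap.star_apply] at *
                    rw [hg, star_zero] }
  haveI hIc : IsClosed (I : Set C(Y₀, ℂ)) :=
    isClosed_eq (continuous_eval_const y₀) continuous_const
  -- the ideal `J` of functions on `W` vanishing at `w₀`
  let J : NonUnitalStarSubalgebra ℂ C(W, ℂ) :=
  { carrier := {g | g w₀ = 0}
    add_mem' := by intro g₁ g₂ h1 h2; simp only [Set.mem_setOf_eq, ContinuousMap.add_apply] at *
                   rw [h1, h2, add_zero]
    zero_mem' := by simp [Set.mem_setOf_eq]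
    mul_mem' := by intro g₁ g₂ h1 h2; simp only [Set.mem_setOf_eq, ContinuousMap.mul_apply] at *
                   rw [h1, h2, mul_zero]
    smul_mem' := by intro c g hg; simp only [Set.mem_setOf_eq, ContinuousMap.smul_apply] at *
                    rw [hg, smul_zero]
    star_mem' := by intro g hg; simp only [Set.mem_setOf_eq, ContinuousMap.star_apply] at *
                    rw [hg, star_zero] }
  haveI hJc : IsClosed (J : Set C(W, ℂ)) :=
    isClosed_eq (continuous_eval_const w₀) continuous_const
  -- restriction homomorphism from `I` to `J`
  let inclW : C(W, Y₀) := ⟨Subtype.val, continuous_subtype_val⟩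
  let ρ : ↥I →⋆ₙₐ[ℂ] ↥J :=
  { toFun := fun g => ⟨(g : C(Y₀, ℂ)).comp inclW, show (g : C(Y₀, ℂ)) ((w₀ : Y₀)) = 0 from g.2⟩
    map_smul' := fun c g => rfl
    map_zero' := rfl
    map_add' := fun g₁ g₂ => rfl
    map_mul' := fun g₁ g₂ => rfl
    map_star' := fun g => rfl }
  have hρsurj : Function.Surjective ρ := by
    intro j
    have hval_emb : Topology.IsClosedEmbedding (Subtype.val : W → Y₀) := by
      refine ⟨Topology.IsEmbedding.subtypeVal, ?_⟩
      rw [Subtype.range_coe_subtype]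
      exact hWclosed
    obtain ⟨G, hG⟩ := ContinuousMap.exists_extension (e := (Subtype.val : W → Y₀))
      hval_emb (j : C(W, ℂ))
    have hGy₀ : G y₀ = 0 := by
      have h1 := DFunLike.congr_fun hG w₀
      have h2 : (j : C(W, ℂ)) w₀ = 0 := j.2
      rw [← hw₀val]
      simpa [h2] using h1
    refine ⟨⟨G, hGy₀⟩, ?_⟩
    apply Subtype.ext
    ext w
    exact DFunLike.congr_fun hG w
  -- the homomorphism `φ : C₀(X, ℂ) → J`
  let hZCM : C(W, OnePoint X) := ⟨hZ.symm, hZ.symm.continuous⟩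
  have hφmem : ∀ a : C₀(X, ℂ), (extZero a).comp hZCM ∈ J := by
    intro a
    show extZero a (hZ.symm w₀) = 0
    rw [hw₀def, Homeomorph.symm_apply_apply, extZero_infty]
  let φ : C₀(X, ℂ) →⋆ₙₐ[ℂ] ↥J :=
  { toFun := fun a => ⟨(extZero a).comp hZCM, hφmem a⟩
    map_smul' := fun c a => by
      apply Subtype.ext; ext w
      show extZero (c • a) (hZ.symm w) = c • extZero a (hZ.symm w)
      rw [extZero_smul]; rfl
    map_zero' := by
      apply Subtype.ext; ext w
      show extZero (0 : C₀(X, ℂ)) (hZ.symm w) = 0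
      rw [extZero_zero]; rfl
    map_add' := fun a b => by
      apply Subtype.ext; ext w
      show extZero (a + b) (hZ.symm w) = extZero a (hZ.symm w) + extZero b (hZ.symm w)
      rw [extZero_add]; rfl
    map_mul' := fun a b => by
      apply Subtype.ext; ext w
      show extZero (a * b) (hZ.symm w) = extZero a (hZ.symm w) * extZero b (hZ.symm w)
      rw [extZero_mul]; rfl
    map_star' := fun a => by
      apply Subtype.ext; ext w
      show extZero (star a) (hZ.symm w) = star (extZero a (hZ.symm w))
      rw [extZero_star]; rfl }
  -- apply weak projectivity through `ULift`s to fix universes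
  let ρ' := (uliftUpHom (A := ↥J)).comp (ρ.comp (uliftDownHom (A := ↥I)))
  have hρ'surj : Function.Surjective ρ' := by
    intro c
    obtain ⟨b, hb⟩ := hρsurj c.down
    exact ⟨ULift.up b, by simp [ρ', hb]⟩
  obtain ⟨φₙ', hφₙ'⟩ := h (ULift ↥I) (ULift ↥J) ρ' hρ'surj
    ((uliftUpHom (A := ↥J)).comp φ)
  let φₙ : ℕ → (C₀(X, ℂ) →⋆ₙₐ[ℂ] ↥I) := fun n => (uliftDownHom (A := ↥I)).comp (φₙ' n)
  have hφ : ∀ a : C₀(X, ℂ), Tendsto (fun n => ‖ρ (φₙ n a) - φ a‖) atTop (𝓝 0) := by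
    intro a
    have := hφₙ' a
    convert this using 2 with n
    rfl
  -- build the retractions via characters
  let χ : ℕ → Y₀ → (C(OnePoint X, ℂ) →ₐ[ℂ] ℂ) := fun n y =>
  { toFun := fun f => f ∞ + ((φₙ n (restr f) : C(Y₀, ℂ)) y)
    map_one' := by
      simp only [restr_one, map_zero, ContinuousMap.one_apply]
      have : ((0 : ↥I) : C(Y₀, ℂ)) y = 0 := rfl
      rw [this, add_zero]
    map_mul' := fun f g => by
      simp only [ContinuousMap.mul_apply]
      rw [restr_mul, map_add, map_add, _root_.map_smul, _root_.map_smul, map_mul]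
      have hadd : ∀ u v : ↥I, ((u + v : ↥I) : C(Y₀, ℂ)) y
          = (u : C(Y₀, ℂ)) y + (v : C(Y₀, ℂ)) y := fun u v => rfl
      have hsmul : ∀ (c : ℂ) (u : ↥I), ((c • u : ↥I) : C(Y₀, ℂ)) y
          = c * (u : C(Y₀, ℂ)) y := fun c u => rfl
      have hmul : ∀ u v : ↥I, ((u * v : ↥I) : C(Y₀, ℂ)) y
          = (u : C(Y₀, ℂ)) y * (v : C(Y₀, ℂ)) y := fun u v => rfl
      rw [hadd, hadd, hsmul, hsmul, hmul]
      ring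
    map_zero' := by
      have h0 : restr (0 : C(OnePoint X, ℂ)) = 0 := by ext x; simp
      simp only [h0, map_zero, ContinuousMap.zero_apply]
      have : ((0 : ↥I) : C(Y₀, ℂ)) y = 0 := rfl
      rw [this, add_zero]
    map_add' := fun f g => by
      simp only [ContinuousMap.add_apply]
      rw [restr_add, map_add]
      have hadd : ∀ u v : ↥I, ((u + v : ↥I) : C(Y₀, ℂ)) y
          = (u : C(Y₀, ℂ)) y + (v : C(Y₀, ℂ)) y := fun u v => rfl
      rw [hadd]
      ring
    commutes' := fun c => by
      simp only [restr_algebraMap, map_zero]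
      have : ((0 : ↥I) : C(Y₀, ℂ)) y = 0 := rfl
      rw [this, add_zero]
      rfl }
  let hE := WeakDual.CharacterSpace.homeoEval (X := OnePoint X) (𝕜 := ℂ)
  let r : ℕ → Y₀ → OnePoint X := fun n y =>
    hE.symm (WeakDual.CharacterSpace.equivAlgHom.symm (χ n y))
  have hkey : ∀ (n : ℕ) (y : Y₀) (f : C(OnePoint X, ℂ)), f (r n y) = χ n y f := by
    intro n y f
    have h1 : hE (r n y) = WeakDual.CharacterSpace.equivAlgHom.symm (χ n y) :=
      hE.apply_symm_apply _
    have h2 : (hE (r n y)) f = f (r n y) := rfl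
    rw [← h2, h1]
    exact congrFun (WeakDual.CharacterSpace.equivAlgHom_symm_coe (χ n y)) f
  have hrcont : ∀ n, Continuous (r n) := by
    intro n
    refine (Homeomorph.continuous _).comp ?_
    refine continuous_induced_rng.mpr ?_
    apply WeakDual.continuous_of_continuous_eval
    intro f
    show Continuous fun y => f ∞ + ((φₙ n (restr f) : C(Y₀, ℂ)) y)
    exact continuous_const.add (map_continuous ((φₙ n (restr f) : C(Y₀, ℂ))))
  have hr0 : ∀ n, r n y₀ = ∞ := by
    intro n
    have hchar : WeakDual.CharacterSpace.equivAlgHom.symm (χ n y₀) = hE ∞ := by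
      apply Subtype.ext
      apply ContinuousLinearMap.ext
      intro f
      have hmem : ((φₙ n (restr f) : C(Y₀, ℂ))) y₀ = 0 := (φₙ n (restr f)).2
      show χ n y₀ f = f ∞
      show f ∞ + ((φₙ n (restr f) : C(Y₀, ℂ)) y₀) = f ∞
      rw [hmem, add_zero]
    show hE.symm _ = ∞
    rw [hchar, Homeomorph.symm_apply_apply]
  have hval : ∀ (n : ℕ) (z : OnePoint X) (a : C₀(X, ℂ)),
      extZero a (r n (κ z)) = ((ρ (φₙ n a) : C(W, ℂ))) (hZ z) := by
    intro n z a
    rw [hkey]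
    show extZero a ∞ + ((φₙ n (restr (extZero a)) : C(Y₀, ℂ)) (κ z)) = _
    rw [extZero_infty, zero_add, restr_extZero]
    rfl
  -- final retractions
  refine ⟨fun n y => r n ⟨eY y, Set.mem_range_self y⟩, ?_, ?_, ?_⟩
  · intro n
    exact (hrcont n).comp ((heY.continuous).subtype_mk _)
  · intro n
    show r n (κ ∞) = ∞
    exact hr0 n
  · -- uniform convergence
    refine tendstoUniformlyCompat_of_sep (Set.range extZero) ?_ _ ?_
    · intro p q hpq
      obtain ⟨a, ha⟩ := exists_extZero_ne p q hpq
      exact ⟨extZero a, Set.mem_range_self a, ha⟩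
    · rintro f ⟨a, rfl⟩ ε hε
      have hev : ∀ᶠ n in atTop, ‖ρ (φₙ n a) - φ a‖ < ε := (hφ a).eventually (gt_mem_nhds hε)
      filter_upwards [hev] with n hn z
      show ‖extZero a (r n (κ z)) - extZero a z‖ < ε
      have h1 : extZero a z = ((φ a : C(W, ℂ))) (hZ z) := by
        show extZero a z = extZero a (hZ.symm (hZ z))
        rw [Homeomorph.symm_apply_apply]
      rw [hval n z a, h1]
      have h2 : ((ρ (φₙ n a) : C(W, ℂ))) (hZ z) - ((φ a : C(W, ℂ))) (hZ z)
          = ((ρ (φₙ n a) - φ a : ↥J) : C(W, ℂ)) (hZ z) := rfl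
      rw [h2]
      calc ‖((ρ (φₙ n a) - φ a : ↥J) : C(W, ℂ)) (hZ z)‖
          ≤ ‖((ρ (φₙ n a) - φ a : ↥J) : C(W, ℂ))‖ := ContinuousMap.norm_coe_le_norm _ _
        _ = ‖ρ (φₙ n a) - φ a‖ := rfl
        _ < ε := hn
end

section
/- Let X be a locally compact, second countable, metrizable Hausdorff space. If the C*-algebra C₀(X, ℂ) of continuous complex-valued functions on X vanishing at infinity is weakly projective with respect to unital C*-algebras, then the one-point compactification X⁺ of X is an approximative absolute retract. -/
open Filter Topology Set TopologicalSpace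

open Filter Topology TopologicalSpace

open ZeroAtInfty OnePoint

set_option linter.unusedSectionVars false
set_option maxHeartbeats 1000000

namespace AARAux

open Filter Topology Set TopologicalSpace ZeroAtInfty OnePoint WeakDual WeakDual.CharacterSpace

universe u v

instance instStarULift {A : Type u} [Star A] : Star (ULift.{v} A) where
  star x := ⟨star x.down⟩

instance {A : Type u} [NonUnitalNormedRing A] [StarRing A] : StarRing (ULift.{v} A) where
  star_involutive x := congrArg ULift.up (star_star x.down)
  star_mul x y := congrArg ULift.up (star_mul x.down y.down)
  star_add x y := congrArg ULift.up (star_add x.down y.down)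

noncomputable instance instULiftCStar {A : Type u} [CStarAlgebra A] :
    CStarAlgebra (ULift.{v} A) where
  norm_mul_self_le x := by
    show ‖x.down‖ * ‖x.down‖ ≤ ‖(star x * x).down‖
    exact CStarRing.norm_mul_self_le x.down
  star_smul c x := congrArg ULift.up (star_smul c x.down)

/-- `ULift.down` as a star algebra homomorphism. -/
noncomputable def downHom (A : Type u) [CStarAlgebra A] : ULift.{v} A →⋆ₐ[ℂ] A where
  toFun := ULift.down
  map_one' := rfl
  map_mul' _ _ := rfl
  map_zero' := rfl
  map_add' _ _ := rfl
  commutes' _ := rfl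
  map_star' _ := rfl

/-- `ULift.up` as a star algebra homomorphism. -/
noncomputable def upHom (A : Type u) [CStarAlgebra A] : A →⋆ₐ[ℂ] ULift.{v} A where
  toFun := ULift.up
  map_one' := rfl
  map_mul' _ _ := rfl
  map_zero' := rfl
  map_add' _ _ := rfl
  commutes' _ := rfl
  map_star' _ := rfl

@[simp] lemma downHom_apply {A : Type u} [CStarAlgebra A] (x : ULift.{v} A) :
    downHom A x = x.down := rfl
@[simp] lemma upHom_apply {A : Type u} [CStarAlgebra A] (x : A) :
    upHom.{u, v} A x = ULift.up x := rfl

section ZeroExt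

variable {X : Type*} [TopologicalSpace X] [T2Space X] [LocallyCompactSpace X]

/-- Extension by zero, as a function. -/
noncomputable def zeroExt (a : C₀(X, ℂ)) : C(OnePoint X, ℂ) :=
  OnePoint.continuousMapMk a.toContinuousMap 0 (by
    rw [Filter.coclosedCompact_eq_cocompact]; exact zero_at_infty a)

@[simp] lemma zeroExt_coe (a : C₀(X, ℂ)) (x : X) : zeroExt a (x : OnePoint X) = a x := rfl
@[simp] lemma zeroExt_infty (a : C₀(X, ℂ)) : zeroExt a (∞ : OnePoint X) = 0 := rfl

/-- Extension by zero as a non-unital star algebra homomorphism. -/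
noncomputable def zeroExtHom : C₀(X, ℂ) →⋆ₙₐ[ℂ] C(OnePoint X, ℂ) where
  toFun := zeroExt
  map_smul' c a := by
    ext p; induction p using OnePoint.rec <;> simp
  map_zero' := by
    ext p; induction p using OnePoint.rec <;> simp
  map_add' a b := by
    ext p; induction p using OnePoint.rec <;> simp
  map_mul' a b := by
    ext p; induction p using OnePoint.rec <;> simp
  map_star' a := by
    ext p; induction p using OnePoint.rec <;> simp

@[simp] lemma zeroExtHom_coe (a : C₀(X, ℂ)) (x : X) :
    zeroExtHom a (x : OnePoint X) = a x := rfl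
@[simp] lemma zeroExtHom_infty (a : C₀(X, ℂ)) : zeroExtHom a (∞ : OnePoint X) = 0 := rfl

/-- Restriction of `f - f ∞` to `X`, landing in `C₀(X, ℂ)`. -/
noncomputable def restrictZero (f : C(OnePoint X, ℂ)) : C₀(X, ℂ) where
  toFun x := f x - f ∞
  continuous_toFun := (f.continuous.comp OnePoint.continuous_coe).sub continuous_const
  zero_at_infty' := by
    have h1 : Tendsto (fun x : X => f x) (cocompact X) (𝓝 (f ∞)) := by
      refine (f.continuous.tendsto ∞).comp ?_
      rw [← Filter.coclosedCompact_eq_cocompact]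
      exact OnePoint.tendsto_coe_infty
    simpa using h1.sub (tendsto_const_nhds : Tendsto (fun _ : X => f ∞) _ _)

@[simp] lemma restrictZero_apply (f : C(OnePoint X, ℂ)) (x : X) :
    restrictZero f x = f x - f ∞ := rfl

lemma restrictZero_mul (f g : C(OnePoint X, ℂ)) :
    restrictZero (f * g) = restrictZero f * restrictZero g + (f ∞) • restrictZero g
      + (g ∞) • restrictZero f := by
  ext x
  simp only [restrictZero_apply, ZeroAtInftyContinuousMap.coe_add, Pi.add_apply,
    ZeroAtInftyContinuousMap.coe_mul, Pi.mul_apply, ZeroAtInftyContinuousMap.coe_smul,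
    Pi.smul_apply, smul_eq_mul, ContinuousMap.mul_apply]
  ring

lemma restrictZero_add (f g : C(OnePoint X, ℂ)) :
    restrictZero (f + g) = restrictZero f + restrictZero g := by
  ext x; simp [restrictZero_apply]; ring

lemma restrictZero_smul (c : ℂ) (f : C(OnePoint X, ℂ)) :
    restrictZero (c • f) = c • restrictZero f := by
  ext x; simp [restrictZero_apply]; ring

lemma restrictZero_star (f : C(OnePoint X, ℂ)) :
    restrictZero (star f) = star (restrictZero f) := by
  ext x; simp [restrictZero_apply]

lemma restrictZero_one : restrictZero (1 : C(OnePoint X, ℂ)) = 0 := by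
  ext x; simp

lemma restrictZero_algebraMap (c : ℂ) :
    restrictZero (algebraMap ℂ C(OnePoint X, ℂ) c) = 0 := by
  ext x; simp

/-- Unital extension of a non-unital star hom out of `C₀(X, ℂ)` to one out of
`C(OnePoint X, ℂ)`. -/
noncomputable def unitalExt {B : Type*} [CStarAlgebra B]
    (ψ : C₀(X, ℂ) →⋆ₙₐ[ℂ] B) : C(OnePoint X, ℂ) →⋆ₐ[ℂ] B where
  toFun f := ψ (restrictZero f) + (f ∞) • 1
  map_one' := by simp [restrictZero_one]
  map_mul' f g := by
    simp only [restrictZero_mul, map_add, map_mul, _root_.map_smul, ContinuousMap.mul_apply]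
    rw [add_mul, mul_add, mul_add, smul_mul_assoc, smul_mul_assoc, one_mul,
      mul_smul_comm, mul_smul_comm, mul_one, smul_smul]
    simp only [mul_one, one_mul]
    abel
  map_zero' := by simp [show restrictZero (0 : C(OnePoint X, ℂ)) = 0 by ext x; simp]
  map_add' f g := by
    simp only [restrictZero_add, map_add, ContinuousMap.add_apply, add_smul]
    abel
  commutes' c := by
    simp only [restrictZero_algebraMap, map_zero, zero_add]
    simp [Algebra.algebraMap_eq_smul_one]
  map_star' f := by
    simp only [restrictZero_star, map_star, ContinuousMap.star_apply]
    rw [star_add, star_smul, star_one]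

@[simp] lemma unitalExt_apply {B : Type*} [CStarAlgebra B]
    (ψ : C₀(X, ℂ) →⋆ₙₐ[ℂ] B) (f : C(OnePoint X, ℂ)) :
    unitalExt ψ f = ψ (restrictZero f) + (f ∞) • 1 := rfl

end ZeroExt

section RMap

variable {Z : Type*} [TopologicalSpace Z] [CompactSpace Z] [T2Space Z]
variable {Y : Type*} [TopologicalSpace Y] [CompactSpace Y] [T2Space Y]

/-- The character of `C(Z, ℂ)` obtained from evaluating `Θ` at `y`. -/
noncomputable def charOf (Θ : C(Z, ℂ) →⋆ₐ[ℂ] C(Y, ℂ)) (y : Y) :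
    characterSpace ℂ C(Z, ℂ) :=
  equivAlgHom.symm ((ContinuousMap.evalAlgHom ℂ ℂ y).comp Θ.toAlgHom)

@[simp] lemma charOf_apply (Θ : C(Z, ℂ) →⋆ₐ[ℂ] C(Y, ℂ)) (y : Y) (F : C(Z, ℂ)) :
    charOf Θ y F = Θ F y := rfl

lemma continuous_charOf (Θ : C(Z, ℂ) →⋆ₐ[ℂ] C(Y, ℂ)) :
    Continuous fun y => charOf Θ y := by
  apply Continuous.subtype_mk
  exact WeakDual.continuous_of_continuous_eval fun F => (Θ F).continuous

/-- The continuous map `Y → Z` associated with a unital star homomorphism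
`C(Z, ℂ) →⋆ₐ[ℂ] C(Y, ℂ)`. -/
noncomputable def rMap (Θ : C(Z, ℂ) →⋆ₐ[ℂ] C(Y, ℂ)) (y : Y) : Z :=
  (homeoEval Z ℂ).symm (charOf Θ y)

lemma continuous_rMap (Θ : C(Z, ℂ) →⋆ₐ[ℂ] C(Y, ℂ)) : Continuous (rMap Θ) :=
  (homeoEval Z ℂ).symm.continuous.comp (continuous_charOf Θ)

lemma rMap_eval (Θ : C(Z, ℂ) →⋆ₐ[ℂ] C(Y, ℂ)) (F : C(Z, ℂ)) (y : Y) :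
    F (rMap Θ y) = Θ F y := by
  have h1 : (homeoEval Z ℂ) (rMap Θ y) = charOf Θ y :=
    (homeoEval Z ℂ).apply_symm_apply _
  have h2 : (homeoEval Z ℂ) (rMap Θ y) F = F (rMap Θ y) :=
    continuousMapEval_apply_apply Z ℂ (rMap Θ y) F
  rw [← h2, h1, charOf_apply]

end RMap

lemma tendstoUniformlyCompat_of_norm {Z : Type*} [TopologicalSpace Z] [CompactSpace Z]
    [T2Space Z] (s : ℕ → Z → Z)
    (hc : ∀ F : C(Z, ℂ), ∀ ε > (0:ℝ), ∀ᶠ n in atTop, ∀ p, ‖F p - F (s n p)‖ < ε) :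
    TendstoUniformlyCompat s id := by
  intro m hm
  subst hm
  letI : MetricSpace Z := m
  rw [Metric.tendstoUniformly_iff]
  intro ε hε
  set K : Set (Z × Z) := {p | ε ≤ dist p.1 p.2} with hK
  have hKclosed : IsClosed K := isClosed_le continuous_const continuous_dist
  have hKcompact : IsCompact K := hKclosed.isCompact
  set U : K → Set (Z × Z) := fun q => {p | ε/2 < |dist p.1 q.1.1 - dist p.2 q.1.1|} with hU
  have hUopen : ∀ q, IsOpen (U q) := fun q =>
    isOpen_lt continuous_const
      (((continuous_fst.dist continuous_const).sub (continuous_snd.dist continuous_const)).abs)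
  have hcover : K ⊆ ⋃ q : K, U q := by
    intro q hq
    refine mem_iUnion.mpr ⟨⟨q, hq⟩, ?_⟩
    have : ε ≤ dist q.1 q.2 := hq
    simp only [hU, mem_setOf_eq, dist_self, zero_sub, abs_neg]
    rw [dist_comm q.2 q.1, abs_of_nonneg dist_nonneg]
    linarith
  obtain ⟨t, ht⟩ := hKcompact.elim_finite_subcover U hUopen hcover
  set F : K → C(Z, ℂ) := fun q =>
    ⟨fun p => ((dist p q.1.1 : ℝ) : ℂ),
      Complex.continuous_ofReal.comp (continuous_id.dist continuous_const)⟩ with hF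
  have hev : ∀ᶠ n in atTop, ∀ q ∈ t, ∀ p, ‖F q p - F q (s n p)‖ < ε/2 :=
    t.eventually_all.mpr fun q _ => hc (F q) (ε/2) (by linarith)
  filter_upwards [hev] with n hn p
  by_contra hp
  push_neg at hp
  have hmem : (p, s n p) ∈ K := by simpa [hK] using hp
  obtain ⟨q, hqt, hqU⟩ := Set.mem_iUnion₂.mp (ht hmem)
  have h1 : ‖F q p - F q (s n p)‖ < ε/2 := hn q hqt p
  have h2 : ‖F q p - F q (s n p)‖ = |dist p q.1.1 - dist (s n p) q.1.1| := by
    simp only [hF, ContinuousMap.coe_mk]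
    rw [← Complex.ofReal_sub, Complex.norm_real, Real.norm_eq_abs]
  have h3 : ε/2 < |dist p q.1.1 - dist (s n p) q.1.1| := hqU
  rw [h2] at h1
  linarith

lemma secondCountable_of_compact_metrizable (Y : Type*) [TopologicalSpace Y]
    [CompactSpace Y] [MetrizableSpace Y] : SecondCountableTopology Y := by
  letI := metrizableSpaceMetric Y
  infer_instance

lemma norm_comp_homeo {W V : Type*} [TopologicalSpace W] [TopologicalSpace V]
    [CompactSpace W] [CompactSpace V] (h : W ≃ₜ V) (w : C(V, ℂ)) :
    ‖w.comp (h : C(W, V))‖ = ‖w‖ := by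
  apply le_antisymm
  · refine (ContinuousMap.norm_le _ (norm_nonneg _)).mpr fun x => ?_
    exact (w.norm_coe_le_norm (h x))
  · refine (ContinuousMap.norm_le _ (norm_nonneg _)).mpr fun v => ?_
    calc ‖w v‖ = ‖(w.comp (h : C(W, V))) (h.symm v)‖ := by simp
    _ ≤ ‖w.comp (h : C(W, V))‖ := (w.comp (h : C(W, V))).norm_coe_le_norm _

end AARAux

theorem statement12 (X : Type*) [TopologicalSpace X] [T2Space X]
    [LocallyCompactSpace X] [SecondCountableTopology X] [MetrizableSpace X]
    (h : WeaklyProjectiveWrtUnital C₀(X, ℂ)) :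
    IsAAR (OnePoint X) := by
  classical
  intro Y _ _ _ ι hι hclosed
  haveI : SecondCountableTopology Y := AARAux.secondCountable_of_compact_metrizable Y
  -- a `Type 0` model of `Y`
  obtain ⟨f, hf⟩ := TopologicalSpace.exists_embedding_l_infty Y
  set S : Set (BoundedContinuousFunction ℕ ℝ) := Set.range f with hS
  haveI : CompactSpace S := isCompact_iff_compactSpace.mp (isCompact_range hf.continuous)
  set e : Y ≃ₜ S := hf.toHomeomorph with he
  -- a `Type 0` model of `OnePoint X`
  set k : OnePoint X → S := fun z => e (ι z) with hk
  have hkemb : Topology.IsEmbedding k := e.isEmbedding.comp hι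
  set Z₀ : Set S := Set.range k with hZ₀
  haveI : CompactSpace Z₀ :=
    isCompact_iff_compactSpace.mp (isCompact_range (e.continuous.comp hι.continuous))
  have hZ₀closed : IsClosed (Z₀ : Set S) :=
    (isCompact_range (e.continuous.comp hι.continuous)).isClosed
  set g : OnePoint X ≃ₜ Z₀ := hkemb.toHomeomorph with hg
  have hgval : ∀ p, (g p : S) = k p := fun p => rfl
  -- the homomorphisms
  set ρ₀ : C(S, ℂ) →⋆ₐ[ℂ] C(Z₀, ℂ) :=
    ContinuousMap.compStarAlgHom' ℂ ℂ ⟨Subtype.val, continuous_subtype_val⟩ with hρ₀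
  set τ : C(OnePoint X, ℂ) →⋆ₐ[ℂ] C(Z₀, ℂ) :=
    ContinuousMap.compStarAlgHom' ℂ ℂ (g.symm : C(Z₀, OnePoint X)) with hτ
  set σ : C(S, ℂ) →⋆ₐ[ℂ] C(Y, ℂ) :=
    ContinuousMap.compStarAlgHom' ℂ ℂ (e : C(Y, S)) with hσ
  set ρY : C(Y, ℂ) →⋆ₐ[ℂ] C(OnePoint X, ℂ) :=
    ContinuousMap.compStarAlgHom' ℂ ℂ ⟨ι, hι.continuous⟩ with hρY
  have hρ₀surj : Function.Surjective ρ₀ := by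
    intro c
    obtain ⟨G, hG⟩ := ContinuousMap.exists_extension
      hZ₀closed.isClosedEmbedding_subtypeVal c
    exact ⟨G, hG⟩
  -- apply weak projectivity
  obtain ⟨φₙ, hφₙ⟩ := h (ULift C(S, ℂ)) (ULift C(Z₀, ℂ))
    ((AARAux.upHom C(Z₀, ℂ)).comp (ρ₀.comp (AARAux.downHom C(S, ℂ))))
    (fun c => ⟨⟨(hρ₀surj c.down).choose⟩, congrArg ULift.up (hρ₀surj c.down).choose_spec⟩)
    (((AARAux.upHom C(Z₀, ℂ)).comp τ).toNonUnitalStarAlgHom.comp AARAux.zeroExtHom)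
  -- transfer the approximating homomorphisms to `C(Y, ℂ)`
  set ψ : ℕ → (C₀(X, ℂ) →⋆ₙₐ[ℂ] C(Y, ℂ)) := fun n =>
    (σ.toNonUnitalStarAlgHom.comp
      (AARAux.downHom C(S, ℂ)).toNonUnitalStarAlgHom).comp (φₙ n) with hψ
  -- key algebraic identity
  have hkey : ∀ c : C(S, ℂ), ρ₀ c = τ (ρY (σ c)) := by
    intro c
    ext z₀
    show c z₀.val = c (k (g.symm z₀))
    have : k (g.symm z₀) = (g (g.symm z₀) : S) := (hgval _).symm
    rw [this, g.apply_symm_apply]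
  have hτnorm : ∀ w : C(OnePoint X, ℂ), ‖τ w‖ = ‖w‖ := fun w =>
    AARAux.norm_comp_homeo g.symm w
  -- convergence at the level of `C₀(X, ℂ)`
  have hconv₀ : ∀ a : C₀(X, ℂ),
      Tendsto (fun n => ‖ρY (ψ n a) - AARAux.zeroExtHom a‖) atTop (𝓝 0) := by
    intro a
    have := hφₙ a
    refine this.congr fun n => ?_
    have h1 : ‖(((AARAux.upHom C(Z₀, ℂ)).comp (ρ₀.comp (AARAux.downHom C(S, ℂ)))) (φₙ n a) -
        (((AARAux.upHom C(Z₀, ℂ)).comp τ).toNonUnitalStarAlgHom.comp AARAux.zeroExtHom) a)‖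
        = ‖ρ₀ ((φₙ n a).down) - τ (AARAux.zeroExtHom a)‖ := rfl
    rw [h1, hkey ((φₙ n a).down), ← map_sub τ, hτnorm]
    rfl
  -- the unital extensions and induced maps
  set Θ : ℕ → (C(OnePoint X, ℂ) →⋆ₐ[ℂ] C(Y, ℂ)) := fun n => AARAux.unitalExt (ψ n) with hΘ
  set r : ℕ → Y → OnePoint X := fun n => AARAux.rMap (Θ n) with hr
  refine ⟨r, fun n => AARAux.continuous_rMap (Θ n), ?_⟩
  -- convergence for all of `C(OnePoint X, ℂ)`
  have hconv : ∀ F : C(OnePoint X, ℂ),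
      Tendsto (fun n => ‖ρY (Θ n F) - F‖) atTop (𝓝 0) := by
    intro F
    have hident : ∀ n, ρY (Θ n F) - F
        = ρY (ψ n (AARAux.restrictZero F)) - AARAux.zeroExtHom (AARAux.restrictZero F) := by
      intro n
      ext p
      have hΘF : Θ n F = ψ n (AARAux.restrictZero F) + (F ∞) • 1 := rfl
      rw [hΘF, map_add, _root_.map_smul, map_one]
      induction p using OnePoint.rec with
      | infty =>
        simp [hρY, ContinuousMap.compStarAlgHom'_apply]
      | coe x =>
        simp [hρY, ContinuousMap.compStarAlgHom'_apply]
        ring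
    have := hconv₀ (AARAux.restrictZero F)
    refine this.congr fun n => ?_
    rw [hident n]
  -- uniform convergence
  apply AARAux.tendstoUniformlyCompat_of_norm
  intro F ε hε
  have hev : ∀ᶠ n in atTop, ‖ρY (Θ n F) - F‖ < ε := (hconv F).eventually (gt_mem_nhds hε)
  filter_upwards [hev] with n hn p
  have h1 : F (r n (ι p)) = ρY (Θ n F) p := by
    rw [hr]
    rw [AARAux.rMap_eval (Θ n) F (ι p)]
    rfl
  have h2 : ‖F p - F (r n (ι p))‖ = ‖(F - ρY (Θ n F)) p‖ := by
    rw [h1]; rfl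
  rw [h2]
  calc ‖(F - ρY (Θ n F)) p‖ ≤ ‖F - ρY (Θ n F)‖ := (F - ρY (Θ n F)).norm_coe_le_norm p
  _ = ‖ρY (Θ n F) - F‖ := norm_sub_rev _ _
  _ < ε := hn
end

section
/- Let A and B be separable C*-algebras. If A is weakly projective with respect to unital C*-algebras and the unitizations Ã and B̃ are isomorphic as C*-algebras (via a star algebra isomorphism), then B is weakly projective with respect to unital C*-algebras. -/
open Filter Topology TopologicalSpace

universe u v

/-- An instance-free universe-lifting wrapper. -/
structure ModelAux (T : Type) : Type u where
  down : T

def ModelAux.equiv (T : Type) : ModelAux.{u} T ≃ T where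
  toFun := ModelAux.down
  invFun := ModelAux.mk
  left_inv _ := rfl
  right_inv _ := rfl

lemma exists_small_cstar_model (X : Type v) [CStarAlgebra X] [SeparableSpace X] :
    ∃ (Y : Type u) (_ : CStarAlgebra Y), Nonempty (Y ≃⋆ₐ[ℂ] X) := by
  have : Nonempty X := ⟨1⟩
  let s : ℕ → X := denseSeq X
  let j : X → (ℕ → ℝ) := fun x n => dist x (s n)
  have hj : Function.Injective j := by
    intro x y h
    have hd : ∀ n, dist x (s n) = dist y (s n) := fun n => congrFun h n
    have key : ∀ ε > (0:ℝ), dist x y < ε := by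
      intro ε hε
      obtain ⟨_, ⟨n, rfl⟩, hn⟩ :=
        Metric.mem_closure_iff.mp (denseRange_denseSeq X x) (ε/2) (by linarith)
      calc dist x y ≤ dist x (s n) + dist (s n) y := dist_triangle _ _ _
        _ = dist x (s n) + dist x (s n) := by rw [dist_comm (s n) y, ← hd n]
        _ < ε := by simpa using add_lt_add hn hn
    refine eq_of_dist_eq_zero (le_antisymm ?_ dist_nonneg)
    by_contra h3
    push_neg at h3
    exact absurd (key _ h3) (lt_irrefl _)
  let f : ModelAux.{u} (Set.range j) ≃ X :=
    (ModelAux.equiv _).trans (Equiv.ofInjective j hj).symm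
  set Y := ModelAux.{u} (Set.range j) with hY
  letI : Ring Y := f.ring
  letI : Algebra ℂ Y := f.algebra ℂ
  let g : Y ≃ₐ[ℂ] X := f.algEquiv ℂ
  letI : Star Y := ⟨fun y => g.symm (star (g y))⟩
  have gstar : ∀ y : Y, g (star y) = star (g y) := fun y => g.apply_symm_apply _
  letI : StarRing Y :=
    { star_involutive := fun y => g.injective <| by simp [gstar]
      star_mul := fun x y => g.injective <| by simp [gstar, map_mul, mul_comm]
      star_add := fun x y => g.injective <| by simp [gstar, map_add] }
  letI : NormedRing Y := NormedRing.induced Y X g.toAlgHom g.injective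
  letI : NormedAlgebra ℂ Y := NormedAlgebra.induced ℂ Y X g.toAlgHom
  letI : StarModule ℂ Y :=
    ⟨fun c y => g.injective <| by simp [gstar, map_smul]⟩
  have gnorm : ∀ y : Y, ‖g y‖ = ‖y‖ := fun y => rfl
  letI : CStarRing Y :=
    ⟨fun y => by
      rw [← gnorm y, ← gnorm (star y * y), map_mul, gstar]
      exact CStarRing.norm_star_mul_self.symm.le⟩
  letI : CompleteSpace Y := by
    have isom : Isometry (g : Y → X) :=
      AddMonoidHomClass.isometry_of_norm (g : Y →ₐ[ℂ] X) (fun y => rfl)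
    exact (isom.isUniformEmbedding.toIsUniformInducing.completeSpace_congr
      g.surjective).mpr inferInstance
  letI instY : CStarAlgebra Y := {}
  refine ⟨Y, instY, ⟨{ g.toRingEquiv with
    map_star' := gstar
    map_smul' := fun c y => map_smul g c y }⟩⟩


lemma countable_submonoid_closure {M : Type*} [Monoid M] {s : Set M} (hs : s.Countable) :
    (Submonoid.closure s : Set M).Countable := by
  haveI : Countable s := hs.to_subtype
  have : (Submonoid.closure s : Set M) ⊆
      Set.range (fun l : List s => (l.map Subtype.val).prod) := by
    intro x hx
    obtain ⟨l, hl, hprod⟩ := Submonoid.exists_list_of_mem_closure hx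
    refine ⟨l.attach.map (fun y => ⟨y.1, hl y.1 y.2⟩), ?_⟩
    simp only [List.map_map]
    simpa [Function.comp, List.attach_map_val] using hprod
  exact (Set.countable_range _).mono this

lemma isSeparable_adjoin_closure {A : Type*} [CStarAlgebra A] {s : Set A}
    (hs : s.Countable) :
    IsSeparable (closure ((StarAlgebra.adjoin ℂ s : StarSubalgebra ℂ A) : Set A)) := by
  refine IsSeparable.closure ?_
  have h1 : ((StarAlgebra.adjoin ℂ s : StarSubalgebra ℂ A) : Set A) =
      (Submodule.span ℂ (Submonoid.closure (s ∪ star s) : Set A) : Set A) := by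
    have := Algebra.adjoin_eq_span (R := ℂ) (s := s ∪ star s)
    calc ((StarAlgebra.adjoin ℂ s : StarSubalgebra ℂ A) : Set A)
        = ((Algebra.adjoin ℂ (s ∪ star s) : Subalgebra ℂ A) : Set A) := rfl
      _ = _ := by rw [← this]; rfl
  rw [h1]
  have hss : (s ∪ star s).Countable := by
    refine hs.union ?_
    simpa [Set.image_star] using hs.image star
  exact IsSeparable.span (R := ℂ) ((countable_submonoid_closure hss).isSeparable)

open scoped CStarAlgebra

universe uB w1 w2 w3 w4

set_option maxHeartbeats 1000000 in
lemma wp_universe_transfer {B : Type uB} [NonUnitalCStarAlgebra B] [SeparableSpace B]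
    (hB : WeaklyProjectiveWrtUnital.{uB, w1, w2} B) :
    WeaklyProjectiveWrtUnital.{uB, w3, w4} B := by
  intro B' C' _ _ ρ hρ φ
  have hρcont : Continuous ρ := AddMonoidHomClass.continuous_of_bound ρ 1
    (by simpa only [one_mul] using fun x => NonUnitalStarAlgHom.norm_apply_le ρ x)
  -- a countable set whose adjoin-closure contains the range of φ
  obtain ⟨t, htc, htsub⟩ : IsSeparable (Set.range φ) :=
    isSeparable_range (map_continuous φ)
  set C₀ : StarSubalgebra ℂ C' := (StarAlgebra.adjoin ℂ t).topologicalClosure with hC₀def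
  have hC₀closed : IsClosed (C₀ : Set C') := StarSubalgebra.isClosed_topologicalClosure _
  have hC₀coe : (C₀ : Set C') = closure ((StarAlgebra.adjoin ℂ t : StarSubalgebra ℂ C') : Set C') :=
    StarSubalgebra.topologicalClosure_coe _
  haveI : IsClosed (C₀ : Set C') := hC₀closed
  have hC₀sep : IsSeparable (C₀ : Set C') := by
    rw [hC₀coe]; exact isSeparable_adjoin_closure htc
  haveI : SeparableSpace ↥C₀ := hC₀sep.separableSpace
  have hφC₀ : ∀ b, φ b ∈ C₀ := by
    intro b
    have h1 : φ b ∈ closure t := htsub ⟨b, rfl⟩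
    have h2 : closure t ⊆ (C₀ : Set C') := by
      rw [hC₀coe]
      exact closure_mono (StarAlgebra.subset_adjoin ℂ t)
    exact h2 h1
  -- countable dense subset of C₀
  obtain ⟨D₀, hD₀c, hD₀d⟩ := exists_countable_dense ↥C₀
  set D : Set C' := Subtype.val '' D₀ with hDdef
  have hDc : D.Countable := hD₀c.image _
  have hDsub : D ⊆ (C₀ : Set C') := by rintro _ ⟨⟨y, hy⟩, _, rfl⟩; exact hy
  have hDdense : ∀ x ∈ C₀, x ∈ closure D := by
    intro x hx
    exact closure_subtype.mp (hD₀d.closure_eq ▸ Set.mem_univ (⟨x, hx⟩ : ↥C₀) :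
      (⟨x, hx⟩ : ↥C₀) ∈ closure D₀)
  -- open mapping theorem
  let ρL : B' →L[ℂ] C' := ⟨ρ.toLinearMap, hρcont⟩
  have hρLs : Function.Surjective ρL := hρ
  obtain ⟨K, hKpos, hK⟩ := ρL.exists_preimage_norm_le hρLs
  choose g hg1 hg2 using hK
  have hg1' : ∀ y, ρ (g y) = y := hg1
  -- countable set in B' generating B₀
  set E : Set C' := D ∪ Set.image2 (· - ·) D D with hEdef
  have hEc : E.Countable := hDc.union (Set.Countable.image2 hDc hDc _)
  have hEsub : E ⊆ (C₀ : Set C') := by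
    rintro x (hx | ⟨a, ha, b, hb, rfl⟩)
    · exact hDsub hx
    · exact sub_mem (hDsub ha) (hDsub hb)
  set B₀ : StarSubalgebra ℂ B' := (StarAlgebra.adjoin ℂ (g '' E)).topologicalClosure with hB₀def
  have hB₀closed : IsClosed (B₀ : Set B') := StarSubalgebra.isClosed_topologicalClosure _
  haveI : IsClosed (B₀ : Set B') := hB₀closed
  have hB₀sep : IsSeparable (B₀ : Set B') := by
    rw [hB₀def, StarSubalgebra.topologicalClosure_coe]
    exact isSeparable_adjoin_closure (hEc.image g)
  haveI : SeparableSpace ↥B₀ := hB₀sep.separableSpace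
  have hgE : ∀ x ∈ E, g x ∈ B₀ := fun x hx =>
    (StarSubalgebra.le_topologicalClosure _) (StarAlgebra.subset_adjoin ℂ _ ⟨x, hx, rfl⟩)
  -- ρ maps B₀ into C₀
  have hB₀sub : (B₀ : Set B') ⊆ ρ ⁻¹' (C₀ : Set C') := by
    rw [hB₀def, StarSubalgebra.topologicalClosure_coe]
    refine closure_minimal ?_ (hC₀closed.preimage hρcont)
    intro x hx
    have : StarAlgebra.adjoin ℂ (g '' E) ≤ StarSubalgebra.comap ρ C₀ := by
      refine StarAlgebra.adjoin_le ?_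
      rintro _ ⟨y, hy, rfl⟩
      show ρ (g y) ∈ C₀
      rw [hg1' y]
      exact hEsub hy
    exact this hx
  have hρB₀ : ∀ x : ↥B₀, (ρ.comp B₀.subtype) x ∈ C₀ := fun x => hB₀sub x.2
  -- the restricted surjection
  set ρ₀ : ↥B₀ →⋆ₐ[ℂ] ↥C₀ := StarAlgHom.codRestrict (ρ.comp B₀.subtype) C₀ hρB₀ with hρ₀def
  have hρ₀coe : ∀ x : ↥B₀, (ρ₀ x : C') = ρ (x : B') := fun x => rfl
  -- surjectivity of ρ₀ via a series argument
  have hρ₀surj : Function.Surjective ρ₀ := by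
    rintro ⟨x, hx⟩
    have hxd : ∀ n : ℕ, ∃ y ∈ D, dist x y < (1/2 : ℝ) ^ (n+1) :=
      fun n => Metric.mem_closure_iff.mp (hDdense x hx) _ (by positivity)
    choose d hd1 hd2 using hxd
    set u : ℕ → C' := fun n => Nat.rec (d 0) (fun n _ => d (n+1) - d n) n with hudef
    have hu0 : u 0 = d 0 := rfl
    have huS : ∀ n, u (n+1) = d (n+1) - d n := fun n => rfl
    have huE : ∀ n, u n ∈ E := by
      intro n
      cases n with
      | zero => exact Or.inl (hd1 0)
      | succ n => exact Or.inr (Set.mem_image2_of_mem (hd1 (n+1)) (hd1 n))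
    have hubound : ∀ n, ‖u (n+1)‖ ≤ (1/2 : ℝ) ^ n := by
      intro n
      rw [huS]
      calc ‖d (n+1) - d n‖ ≤ dist (d (n+1)) x + dist x (d n) := by
            rw [← dist_eq_norm]
            exact dist_triangle _ _ _
        _ ≤ (1/2:ℝ)^(n+2) + (1/2:ℝ)^(n+1) := by
            refine add_le_add ?_ (hd2 n).le
            rw [dist_comm]
            exact (hd2 (n+1)).le
        _ ≤ (1/2:ℝ)^n := by
            rw [pow_succ, pow_succ]
            nlinarith [pow_nonneg (by norm_num : (0:ℝ) ≤ 1/2) n]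
    have hsumg : Summable (fun n => g (u n)) := by
      rw [← summable_nat_add_iff 1]
      refine Summable.of_norm_bounded (g := fun n => K * (1/2:ℝ)^n)
        (summable_geometric_two.mul_left K) ?_
      intro n
      calc ‖g (u (n+1))‖ ≤ K * ‖u (n+1)‖ := hg2 _
        _ ≤ K * (1/2:ℝ)^n := by
            exact mul_le_mul_of_nonneg_left (hubound n) hKpos.le
    have hsumu : Summable u := by
      have h := hsumg.map ρL ρL.continuous
      rwa [show (⇑ρL ∘ fun n => g (u n)) = u from funext fun n => hg1' (u n)] at h
    set b' : B' := ∑' n, g (u n) with hb'def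
    have hpartial : ∀ n : ℕ, ∑ i ∈ Finset.range (n+1), u i = d n := by
      intro n
      induction n with
      | zero => simp [hu0]
      | succ n ih => rw [Finset.sum_range_succ, ih, huS]; abel
    have hdx : Tendsto d atTop (𝓝 x) := by
      rw [tendsto_iff_dist_tendsto_zero]
      refine squeeze_zero (g := fun n : ℕ => (1/2:ℝ)^(n+1)) (fun n => dist_nonneg) (fun n => ?_) ?_
      · exact (dist_comm (d n) x ▸ (hd2 n)).le
      · have : Tendsto (fun n : ℕ => (1/2:ℝ)^(n+1)) atTop (𝓝 0) := by
          have h := tendsto_pow_atTop_nhds_zero_of_lt_one (by norm_num : (0:ℝ) ≤ 1/2)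
            (by norm_num : (1/2:ℝ) < 1)
          exact h.comp (tendsto_add_atTop_nat 1)
        exact this
    have htsumu : ∑' n, u n = x := by
      have h1 : Tendsto (fun n => ∑ i ∈ Finset.range n, u i) atTop (𝓝 (∑' n, u n)) :=
        hsumu.hasSum.tendsto_sum_nat
      have h2 : Tendsto (fun n => ∑ i ∈ Finset.range (n+1), u i) atTop (𝓝 (∑' n, u n)) :=
        h1.comp (tendsto_add_atTop_nat 1)
      have h3 : Tendsto (fun n => ∑ i ∈ Finset.range (n+1), u i) atTop (𝓝 x) := by
        simpa only [hpartial] using hdx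
      exact tendsto_nhds_unique h2 h3
    have hb'mem : b' ∈ B₀ := by
      refine hB₀closed.mem_of_tendsto hsumg.hasSum.tendsto_sum_nat
        (Filter.Eventually.of_forall fun n => ?_)
      exact sum_mem (fun i _ => hgE _ (huE i))
    have hρb' : ρ b' = x := by
      have h : ρL b' = ∑' n, ρL (g (u n)) := ρL.map_tsum hsumg
      rw [show (fun n => ρL (g (u n))) = u from funext fun n => hg1' (u n)] at h
      exact (show ρ b' = ρL b' from rfl).trans (h.trans htsumu)
    exact ⟨⟨b', hb'mem⟩, Subtype.ext ((hρ₀coe _).trans hρb')⟩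
  -- restrict φ to C₀
  let φ₀ : B →⋆ₙₐ[ℂ] ↥C₀ :=
    { toFun := fun b => ⟨φ b, hφC₀ b⟩
      map_smul' := fun c b => Subtype.ext (map_smul φ c b)
      map_zero' := Subtype.ext (map_zero φ)
      map_add' := fun a b => Subtype.ext (map_add φ a b)
      map_mul' := fun a b => Subtype.ext (map_mul φ a b)
      map_star' := fun a => Subtype.ext (map_star φ a) }
  have hφ₀coe : ∀ b, (φ₀ b : C') = φ b := fun _ => rfl
  -- small models in the universes of hB
  obtain ⟨P, instP, ⟨eP⟩⟩ := exists_small_cstar_model.{w1} ↥B₀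
  obtain ⟨Q, instQ, ⟨eQ⟩⟩ := exists_small_cstar_model.{w2} ↥C₀
  let ρhat : P →⋆ₐ[ℂ] Q :=
    (eQ.symm : ↥C₀ →⋆ₐ[ℂ] Q).comp
      (ρ₀.comp ((eP : P ≃⋆ₐ[ℂ] ↥B₀) : P →⋆ₐ[ℂ] ↥B₀))
  have hρhat : ∀ p, ρhat p = eQ.symm (ρ₀ (eP p)) := fun _ => rfl
  have hρhatsurj : Function.Surjective ρhat := by
    intro q
    obtain ⟨y, hy⟩ := hρ₀surj (eQ q)
    refine ⟨eP.symm y, ?_⟩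
    rw [hρhat, eP.apply_symm_apply, hy, eQ.symm_apply_apply]
  let φhat : B →⋆ₙₐ[ℂ] Q :=
    ((eQ.symm : ↥C₀ →⋆ₐ[ℂ] Q) : ↥C₀ →⋆ₙₐ[ℂ] Q).comp φ₀
  have hφhat : ∀ b, φhat b = eQ.symm (φ₀ b) := fun _ => rfl
  obtain ⟨ψ, hψ⟩ := hB P Q ρhat hρhatsurj φhat
  refine ⟨fun n => ((B₀.subtype.comp ((eP : P ≃⋆ₐ[ℂ] ↥B₀) : P →⋆ₐ[ℂ] ↥B₀) :
      P →⋆ₐ[ℂ] B') : P →⋆ₙₐ[ℂ] B').comp (ψ n), fun b => ?_⟩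
  have key : ∀ n, ‖ρ ((((B₀.subtype.comp ((eP : P ≃⋆ₐ[ℂ] ↥B₀) : P →⋆ₐ[ℂ] ↥B₀) :
      P →⋆ₐ[ℂ] B') : P →⋆ₙₐ[ℂ] B').comp (ψ n)) b) - φ b‖ = ‖ρhat (ψ n b) - φhat b‖ := by
    intro n
    have h1 : ρ ((B₀.subtype) (eP (ψ n b))) = ((ρ₀ (eP (ψ n b)) : ↥C₀) : C') := rfl
    have h2 : (ρ₀ (eP (ψ n b)) : ↥C₀) = eQ (ρhat (ψ n b)) := by
      rw [hρhat, eQ.apply_symm_apply]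
    have h3 : (φ₀ b : ↥C₀) = eQ (φhat b) := by
      rw [hφhat, eQ.apply_symm_apply]
    have h4 : ρ ((((B₀.subtype.comp ((eP : P ≃⋆ₐ[ℂ] ↥B₀) : P →⋆ₐ[ℂ] ↥B₀) :
        P →⋆ₐ[ℂ] B') : P →⋆ₙₐ[ℂ] B').comp (ψ n)) b) - φ b
        = ((eQ (ρhat (ψ n b)) - eQ (φhat b) : ↥C₀) : C') := by
      push_cast
      rw [← h2, ← h3]
      rfl
    rw [h4, ← map_sub eQ]
    calc ‖((eQ (ρhat (ψ n b) - φhat b) : ↥C₀) : C')‖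
        = ‖(eQ (ρhat (ψ n b) - φhat b) : ↥C₀)‖ := rfl
      _ = ‖ρhat (ψ n b) - φhat b‖ := StarAlgEquiv.norm_map eQ _
  refine Tendsto.congr (fun n => (key n).symm) (hψ b)

universe x1 x2

set_option maxHeartbeats 1000000 in
lemma wp_iso_transfer {A : Type x1} {B : Type x2} [NonUnitalCStarAlgebra A]
    [NonUnitalCStarAlgebra B]
    (hA : WeaklyProjectiveWrtUnital.{x1, w1, w2} A)
    (e : Unitization ℂ A ≃⋆ₐ[ℂ] Unitization ℂ B) :
    WeaklyProjectiveWrtUnital.{x2, w1, w2} B := by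
  intro B' C' _ _ ρ hρ φ
  let Φ : Unitization ℂ B →⋆ₐ[ℂ] C' := Unitization.starLift φ
  let φA : A →⋆ₙₐ[ℂ] C' :=
    ((Φ.comp (e : Unitization ℂ A →⋆ₐ[ℂ] Unitization ℂ B)) :
      Unitization ℂ A →⋆ₙₐ[ℂ] C').comp (Unitization.inrNonUnitalStarAlgHom ℂ A)
  obtain ⟨φₙ, hφₙ⟩ := hA B' C' ρ hρ φA
  refine ⟨fun n => (((Unitization.starLift (φₙ n)).comp
      (e.symm : Unitization ℂ B →⋆ₐ[ℂ] Unitization ℂ A)) :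
      Unitization ℂ B →⋆ₙₐ[ℂ] B').comp (Unitization.inrNonUnitalStarAlgHom ℂ B),
    fun b => ?_⟩
  set x : Unitization ℂ A := e.symm (b : Unitization ℂ B) with hxdef
  have hx : Unitization.inl x.fst + (x.snd : Unitization ℂ A) = x :=
    Unitization.inl_fst_add_inr_snd_eq x
  have hb : (b : Unitization ℂ B) = e x := by simp [hxdef]
  have key : ∀ n, ρ ((Unitization.starLift (φₙ n)) x) - φ b
      = ρ (φₙ n x.snd) - φA x.snd := by
    intro n
    have h1 : (Unitization.starLift (φₙ n)) x
        = algebraMap ℂ B' x.fst + φₙ n x.snd := by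
      conv_lhs => rw [← hx]
      rw [map_add, ← Unitization.algebraMap_eq_inl, AlgHomClass.commutes]
      exact congrArg _ ((Unitization.starLift_symm_apply_apply _ _).symm.trans (congrArg (fun ψ => ψ x.snd) (Unitization.starLift.symm_apply_apply (φₙ n))))
    have h2 : φ b = algebraMap ℂ C' x.fst + φA x.snd := by
      have hstep : φ b = Φ (e x) := by
        rw [← hb]; exact (congrArg (fun ψ => ψ b) (Unitization.starLift.symm_apply_apply φ)).symm.trans (Unitization.starLift_symm_apply_apply Φ b)
      rw [hstep]
      nth_rewrite 1 [← hx]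
      rw [map_add, map_add, ← Unitization.algebraMap_eq_inl, AlgHomClass.commutes,
        AlgHomClass.commutes]
      rfl
    rw [h1, map_add, h2, AlgHomClass.commutes]
    abel
  have := hφₙ x.snd
  convert this using 2 with n
  rw [show ((((Unitization.starLift (φₙ n)).comp
      (e.symm : Unitization ℂ B →⋆ₐ[ℂ] Unitization ℂ A)) :
      Unitization ℂ B →⋆ₙₐ[ℂ] B').comp (Unitization.inrNonUnitalStarAlgHom ℂ B)) b
      = (Unitization.starLift (φₙ n)) x from rfl]
  rw [key n]

theorem statement13 (A B : Type*) [NonUnitalCStarAlgebra A] [NonUnitalCStarAlgebra B]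
    [SeparableSpace A] [SeparableSpace B]
    (hA : WeaklyProjectiveWrtUnital A)
    (e : Unitization ℂ A ≃⋆ₐ[ℂ] Unitization ℂ B) :
    WeaklyProjectiveWrtUnital B :=
  wp_universe_transfer (wp_iso_transfer hA e)
end

section
/- Let A and B be separable C*-algebras, let ρ : A → B be a surjective *-homomorphism, and suppose there is a sequence of *-homomorphisms λₙ : B → A such that ‖ρ(λₙ(b)) − b‖ → 0 for every b ∈ B (i.e., B is an approximate retract of A). If A is residually finite dimensional, then B is residually finite dimensional. -/
open Filter Topology TopologicalSpace

/-- A C⋆-algebra `A` is residually finite dimensional (RFD) if for every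
nonzero `a ∈ A` there are `n ≥ 1` and a ⋆-homomorphism `π` from `A` to the
`n × n` complex matrices with `π a ≠ 0`. -/
def ResiduallyFiniteDimensional (A : Type*) [NonUnitalCStarAlgebra A] : Prop :=
  ∀ a : A, a ≠ 0 → ∃ n : ℕ, 1 ≤ n ∧
    ∃ π : A →⋆ₙₐ[ℂ] Matrix (Fin n) (Fin n) ℂ, π a ≠ 0

theorem statement16 (A B : Type*) [NonUnitalCStarAlgebra A] [NonUnitalCStarAlgebra B]
    [SeparableSpace A] [SeparableSpace B]
    (ρ : A →⋆ₙₐ[ℂ] B) (hρ : Function.Surjective ρ)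
    (lam : ℕ → (B →⋆ₙₐ[ℂ] A))
    (hlam : ∀ b : B, Tendsto (fun n => ‖ρ (lam n b) - b‖) atTop (𝓝 0))
    (hA : ResiduallyFiniteDimensional A) :
    ResiduallyFiniteDimensional B := by
  intro b hb
  have hbn : (0:ℝ) < ‖b‖ := norm_pos_iff.mpr hb
  obtain ⟨n, hn⟩ := ((hlam b).eventually (eventually_lt_nhds hbn)).exists
  have hx : lam n b ≠ 0 := by
    intro h
    rw [h, map_zero, zero_sub, norm_neg] at hn
    exact lt_irrefl _ hn
  obtain ⟨m, hm, π, hπ⟩ := hA (lam n b) hx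
  exact ⟨m, hm, π.comp (lam n), hπ⟩
end
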